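/- arXiv:2601.16796 — 3 statements merged into one kernel-verified Lean document; each statement's English description precedes it below -/
import Mathlib

section
/- If f : [a,b] → ℝ is of class C^6 with f⁽⁶⁾(x) ≥ 0 for all x ∈ [a,b], then G[f;a,b] ≤ ∫_a^b f(x) dx ≤ L[f;a,b], where G is the three-point Gauss quadrature and L is the four-point Lobatto quadrature on [a,b]. -/
open MeasureTheory intervalIntegral

noncomputable def gaussQ (f : ℝ → ℝ) (a b : ℝ) : ℝ :=
  (b - a) / 18 * (5 * f ((5 + Real.sqrt 15) / 10 * a + (5 - Real.sqrt 15) / 10 * b)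
    + 8 * f ((a + b) / 2)
    + 5 * f ((5 - Real.sqrt 15) / 10 * a + (5 + Real.sqrt 15) / 10 * b))

noncomputable def lobattoQ (f : ℝ → ℝ) (a b : ℝ) : ℝ :=
  (b - a) / 12 * (f a + 5 * f ((5 + Real.sqrt 5) / 10 * a + (5 - Real.sqrt 5) / 10 * b)
    + 5 * f ((5 - Real.sqrt 5) / 10 * a + (5 + Real.sqrt 5) / 10 * b) + f b)

noncomputable def quadQ (f : ℝ → ℝ) (a b : ℝ) : ℝ :=
  3 / 4 * gaussQ f a b + 1 / 4 * lobattoQ f a b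

section BP_aux

/-! ### Algebraic identities -/

private lemma bp_idG0 (s c t : ℝ) (hs : s^2 = 15) :
    3*(c-t)^6 - c*(5*((5-s)/10*c-t)^5 + 8*(c/2-t)^5 + 5*((5+s)/10*c-t)^5) = 3*t^6 := by
  linear_combination (c^3*t^3 - 3/2*c^4*t^2 + 33/40*c^5*t - 13/80*c^6 + 1/200*s^2*c^5*t - 1/400*s^2*c^6) * hs

private lemma bp_idG (s c t : ℝ) (hs : s^2 = 15) :
    3*(c-t)^6 - c*(8*(c/2-t)^5 + 5*((5+s)/10*c-t)^5) = 3*t^6 - 5*c*(t-(5-s)/10*c)^5 := by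
  linear_combination (c^3*t^3 - 3/2*c^4*t^2 + 33/40*c^5*t - 13/80*c^6 + 1/200*s^2*c^5*t - 1/400*s^2*c^6) * hs

private lemma bp_idL0 (p c t : ℝ) (hp : p^2 = 5) :
    c*((c-t)^5 + 5*((5+p)/10*c-t)^5 + 5*((5-p)/10*c-t)^5) - 2*(c-t)^6 = c*t^5 - 2*t^6 := by
  linear_combination (-(c^3*t^3) + 3/2*c^4*t^2 - 31/40*c^5*t + 11/80*c^6 - 1/200*p^2*c^5*t + 1/400*p^2*c^6) * hp

private lemma bp_idL1 (p c t : ℝ) (hp : p^2 = 5) :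
    c*((c-t)^5 + 5*((5+p)/10*c-t)^5) - 2*(c-t)^6 = c*(t^5 + 5*(t-(5-p)/10*c)^5) - 2*t^6 := by
  linear_combination (-(c^3*t^3) + 3/2*c^4*t^2 - 31/40*c^5*t + 11/80*c^6 - 1/200*p^2*c^5*t + 1/400*p^2*c^6) * hp

private lemma bp_gauss_exact (s c d0 d1 d2 d3 d4 d5 : ℝ) (hs : s^2 = 15) :
    d0*c + d1*c^2/2 + d2*c^3/6 + d3*c^4/24 + d4*c^5/120 + d5*c^6/720 =
    c/18*(5*(d0 + d1*((5-s)/10*c) + d2*((5-s)/10*c)^2/2 + d3*((5-s)/10*c)^3/6 + d4*((5-s)/10*c)^4/24 + d5*((5-s)/10*c)^5/120)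
        + 8*(d0 + d1*(c/2) + d2*(c/2)^2/2 + d3*(c/2)^3/6 + d4*(c/2)^4/24 + d5*(c/2)^5/120)
        + 5*(d0 + d1*((5+s)/10*c) + d2*((5+s)/10*c)^2/2 + d3*((5+s)/10*c)^3/6 + d4*((5+s)/10*c)^4/24 + d5*((5+s)/10*c)^5/120)) := by
  linear_combination (-1/360*c^3*d2 - 1/720*c^4*d3 - 11/28800*c^5*d4 - 13/172800*c^6*d5 - 1/432000*s^2*c^5*d4 - 1/864000*s^2*c^6*d5) * hs

private lemma bp_lobatto_exact (p c d0 d1 d2 d3 d4 d5 : ℝ) (hp : p^2 = 5) :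
    d0*c + d1*c^2/2 + d2*c^3/6 + d3*c^4/24 + d4*c^5/120 + d5*c^6/720 =
    c/12*((d0)
        + 5*(d0 + d1*((5-p)/10*c) + d2*((5-p)/10*c)^2/2 + d3*((5-p)/10*c)^3/6 + d4*((5-p)/10*c)^4/24 + d5*((5-p)/10*c)^5/120)
        + 5*(d0 + d1*((5+p)/10*c) + d2*((5+p)/10*c)^2/2 + d3*((5+p)/10*c)^3/6 + d4*((5+p)/10*c)^4/24 + d5*((5+p)/10*c)^5/120)
        + (d0 + d1*c + d2*c^2/2 + d3*c^3/6 + d4*c^4/24 + d5*c^5/120)) := by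
  linear_combination (-1/240*c^3*d2 - 1/480*c^4*d3 - 31/57600*c^5*d4 - 11/115200*c^6*d5 - 1/288000*p^2*c^5*d4 - 1/576000*p^2*c^6*d5) * hp

/-! ### The core inequality -/

private lemma bp_maxlem (t : ℝ) : t^5*(1-t) ≤ 3125/46656 := by
  have hq : 0 ≤ t^4+2/3*t^3+5/12*t^2+25/108*t+125/1296 := by
    nlinarith [sq_nonneg (t^2+t/3), sq_nonneg (t+25/66)]
  nlinarith [mul_nonneg (sq_nonneg (t-5/6)) hq]

private lemma bp_core (s w : ℝ) (hs : s^2 = 15) (hs0 : 0 ≤ s) (hsu : s < 3.873)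
    (h1 : (5-s)/10 ≤ w) (h2 : w ≤ 1/2) : 5*(w-(5-s)/10)^5 ≤ 3*w^6 := by
  set α : ℝ := (5-s)/10 with hα
  have hα0 : 0 < α := by rw [hα]; nlinarith
  have hw0 : 0 < w := lt_of_lt_of_le hα0 h1
  have hw6 : (0:ℝ) < w^6 := by positivity
  have hw' : w ≠ 0 := ne_of_gt hw0
  have hm := bp_maxlem ((w-α)/w)
  have key : (w-α)^5 * α ≤ 3125/46656 * w^6 := by
    have e : ((w-α)/w)^5 * (1-(w-α)/w) = (w-α)^5 * α / w^6 := by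
      field_simp
      ring_nf
    rw [e, div_le_iff₀ hw6] at hm
    linarith [hm]
  have h3 : 15625/46656 ≤ 3*α := by rw [hα]; nlinarith
  have h4 := mul_le_mul_of_nonneg_right h3 hw6.le
  apply le_of_mul_le_mul_left _ hα0
  nlinarith [key]

/-! ### Integral machinery -/

variable {g : ℝ → ℝ}

private lemma bp_intg (hg : Continuous g) (j : ℕ) (u v : ℝ) :
    IntervalIntegrable (fun t => t^j * g t) volume u v :=
  ((continuous_pow j).mul hg).intervalIntegrable u v

private lemma bp_hFd (hg : Continuous g) (a : ℝ) (j : ℕ) (x : ℝ) :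
    HasDerivAt (fun u => ∫ t in a..u, t^j * g t) (x^j * g x) x :=
  (Continuous.integral_hasStrictDerivAt ((continuous_pow j).mul hg) a x).hasDerivAt

private lemma bp_expand5 (hg : Continuous g) (a x : ℝ) :
    (∫ t in a..x, (x-t)^5 * g t) =
      x^5*(∫ t in a..x, t^0*g t) - 5*x^4*(∫ t in a..x, t^1*g t)
      + 10*x^3*(∫ t in a..x, t^2*g t) - 10*x^2*(∫ t in a..x, t^3*g t)
      + 5*x*(∫ t in a..x, t^4*g t) - (∫ t in a..x, t^5*g t) := by
  have A : ∀ (c : ℝ) (j : ℕ), IntervalIntegrable (fun t => c * (t^j * g t)) volume a x :=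
    fun c j => (bp_intg hg j a x).const_mul c
  have i0 := A (x^5) 0; have i1 := A (-5*x^4) 1; have i2 := A (10*x^3) 2
  have i3 := A (-10*x^2) 3; have i4 := A (5*x) 4; have i5 := A (-1) 5
  have e : (fun t => (x-t)^5 * g t) = fun t =>
      x^5*(t^0*g t) + (-5*x^4)*(t^1*g t) + (10*x^3)*(t^2*g t) + (-10*x^2)*(t^3*g t)
      + (5*x)*(t^4*g t) + (-1)*(t^5*g t) := funext fun t => by ring
  rw [e]
  rw [intervalIntegral.integral_add ((((i0.add i1).add i2).add i3).add i4) i5]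
  rw [intervalIntegral.integral_add (((i0.add i1).add i2).add i3) i4]
  rw [intervalIntegral.integral_add ((i0.add i1).add i2) i3]
  rw [intervalIntegral.integral_add (i0.add i1) i2]
  rw [intervalIntegral.integral_add i0 i1]
  simp only [intervalIntegral.integral_const_mul]
  ring

private lemma bp_expand6 (hg : Continuous g) (a x : ℝ) :
    (∫ t in a..x, (x-t)^6 * g t) =
      x^6*(∫ t in a..x, t^0*g t) - 6*x^5*(∫ t in a..x, t^1*g t)
      + 15*x^4*(∫ t in a..x, t^2*g t) - 20*x^3*(∫ t in a..x, t^3*g t)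
      + 15*x^2*(∫ t in a..x, t^4*g t) - 6*x*(∫ t in a..x, t^5*g t)
      + (∫ t in a..x, t^6*g t) := by
  have A : ∀ (c : ℝ) (j : ℕ), IntervalIntegrable (fun t => c * (t^j * g t)) volume a x :=
    fun c j => (bp_intg hg j a x).const_mul c
  have i0 := A (x^6) 0; have i1 := A (-6*x^5) 1; have i2 := A (15*x^4) 2
  have i3 := A (-20*x^3) 3; have i4 := A (15*x^2) 4; have i5 := A (-6*x) 5
  have i6 := A 1 6
  have e : (fun t => (x-t)^6 * g t) = fun t =>
      x^6*(t^0*g t) + (-6*x^5)*(t^1*g t) + (15*x^4)*(t^2*g t) + (-20*x^3)*(t^3*g t)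
      + (15*x^2)*(t^4*g t) + (-6*x)*(t^5*g t) + 1*(t^6*g t) := funext fun t => by ring
  rw [e]
  rw [intervalIntegral.integral_add (((((i0.add i1).add i2).add i3).add i4).add i5) i6]
  rw [intervalIntegral.integral_add ((((i0.add i1).add i2).add i3).add i4) i5]
  rw [intervalIntegral.integral_add (((i0.add i1).add i2).add i3) i4]
  rw [intervalIntegral.integral_add ((i0.add i1).add i2) i3]
  rw [intervalIntegral.integral_add (i0.add i1) i2]
  rw [intervalIntegral.integral_add i0 i1]
  simp only [intervalIntegral.integral_const_mul]
  ring

private lemma bp_rhoCont (hg : Continuous g) (a : ℝ) :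
    Continuous (fun x => ∫ t in a..x, (x-t)^5 * g t) := by
  have e : (fun x => ∫ t in a..x, (x-t)^5 * g t) = fun x =>
      x^5*(∫ t in a..x, t^0*g t) - 5*x^4*(∫ t in a..x, t^1*g t)
      + 10*x^3*(∫ t in a..x, t^2*g t) - 10*x^2*(∫ t in a..x, t^3*g t)
      + 5*x*(∫ t in a..x, t^4*g t) - (∫ t in a..x, t^5*g t) := funext fun x => bp_expand5 hg a x
  rw [e]
  have hF : ∀ j : ℕ, Continuous (fun u => ∫ t in a..u, t^j * g t) :=
    fun j => continuous_iff_continuousAt.2 fun x => (bp_hFd hg a j x).continuousAt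
  fun_prop

private lemma bp_remInt (hg : Continuous g) (a b : ℝ) :
    (∫ x in a..b, ∫ t in a..x, (x-t)^5 * g t) = ∫ t in a..b, (b-t)^6/6 * g t := by
  set F : ℕ → ℝ → ℝ := fun j u => ∫ t in a..u, t^j * g t with hF
  set Φ : ℝ → ℝ := fun x =>
    (x^6*F 0 x - 6*(x^5*F 1 x) + 15*(x^4*F 2 x) - 20*(x^3*F 3 x) + 15*(x^2*F 4 x) - 6*(x*F 5 x) + F 6 x)/6
    with hΦ
  have hd : ∀ x, HasDerivAt Φ (∫ t in a..x, (x-t)^5 * g t) x := by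
    intro x
    have H : ∀ j, HasDerivAt (F j) (x^j * g x) x := fun j => bp_hFd hg a j x
    have h6 : HasDerivAt (fun y : ℝ => y^6) (6*x^5) x := by simpa using hasDerivAt_pow 6 x
    have h5 : HasDerivAt (fun y : ℝ => y^5) (5*x^4) x := by simpa using hasDerivAt_pow 5 x
    have h4 : HasDerivAt (fun y : ℝ => y^4) (4*x^3) x := by simpa using hasDerivAt_pow 4 x
    have h3 : HasDerivAt (fun y : ℝ => y^3) (3*x^2) x := by simpa using hasDerivAt_pow 3 x
    have h2 : HasDerivAt (fun y : ℝ => y^2) (2*x) x := by simpa using hasDerivAt_pow 2 x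
    have h1 : HasDerivAt (fun y : ℝ => y) 1 x := hasDerivAt_id x
    have := ((((((h6.mul (H 0)).sub ((h5.mul (H 1)).const_mul 6)).add
      ((h4.mul (H 2)).const_mul 15)).sub ((h3.mul (H 3)).const_mul 20)).add
      ((h2.mul (H 4)).const_mul 15)).sub ((h1.mul (H 5)).const_mul 6)).add (H 6)
    have hΦd := this.div_const 6
    refine hΦd.congr_deriv ?_
    rw [bp_expand5 hg a x]
    simp only [hF, pow_zero, pow_one, one_mul]
    ring
  have hcont : Continuous (fun x => ∫ t in a..x, (x-t)^5 * g t) := bp_rhoCont hg a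
  have := intervalIntegral.integral_eq_sub_of_hasDerivAt
    (f := Φ) (f' := fun x => ∫ t in a..x, (x-t)^5 * g t)
    (fun x _ => hd x) (hcont.intervalIntegrable a b)
  rw [this]
  have hΦa : Φ a = 0 := by
    simp [hΦ, hF, intervalIntegral.integral_same]
  have hΦb : Φ b = ∫ t in a..b, (b-t)^6/6 * g t := by
    have e : (fun t => (b-t)^6/6 * g t) = fun t => (1/6) * ((b-t)^6 * g t) :=
      funext fun t => by ring
    rw [e, intervalIntegral.integral_const_mul, bp_expand6 hg a b, hΦ]
    simp only [hF, pow_zero, pow_one, one_mul]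
    ring
  rw [hΦa, hΦb]; ring

/-! ### Taylor with integral remainder -/

open Set in
private lemma bp_taylor_int {a b : ℝ} (hab : a < b) {f g : ℝ → ℝ}
    (hf : ContDiffOn ℝ 6 f (Icc a b)) (hg : Continuous g)
    (hgh : ∀ t ∈ Icc a b, g t = iteratedDerivWithin 6 f (Icc a b) t)
    {x : ℝ} (hx : x ∈ Icc a b) :
    f x = taylorWithinEval f 5 (Icc a b) a x + (1/120) * ∫ t in a..x, (x-t)^5 * g t := by
  rcases eq_or_lt_of_le hx.1 with h | hax
  · subst h
    simp [taylorWithinEval_self]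
  · have hf5 : ContDiffOn ℝ 5 f (Icc a b) := hf.of_le (by norm_num)
    have hf' : DifferentiableOn ℝ (iteratedDerivWithin 5 f (Icc a b)) (Ioo a b) :=
      (hf.differentiableOn_iteratedDerivWithin (by norm_num) (uniqueDiffOn_Icc hab)).mono
        Ioo_subset_Icc_self
    have hderiv : ∀ t ∈ Ioo a x, HasDerivWithinAt (fun y => taylorWithinEval f 5 (Icc a b) y x)
        ((120:ℝ)⁻¹ * ((x-t)^5 * g t)) (Ioi t) t := by
      intro t ht
      have htb : t ∈ Ioo a b := ⟨ht.1, lt_of_lt_of_le ht.2 hx.2⟩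
      have := taylorWithinEval_hasDerivAt_Ioo x hab htb hf5 hf'
      have e : ((Nat.factorial 5 : ℝ)⁻¹ * (x - t)^5) • iteratedDerivWithin 6 f (Icc a b) t
          = (120:ℝ)⁻¹ * ((x-t)^5 * g t) := by
        rw [hgh t (Ioo_subset_Icc_self htb)]
        norm_num [Nat.factorial]
        ring
      exact (e ▸ this).hasDerivWithinAt
    have hcont : ContinuousOn (fun y => taylorWithinEval f 5 (Icc a b) y x) (Icc a x) :=
      (continuousOn_taylorWithinEval (uniqueDiffOn_Icc hab) hf5).mono
        (Icc_subset_Icc le_rfl hx.2)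
    have hint : IntervalIntegrable (fun t => (120:ℝ)⁻¹ * ((x-t)^5 * g t)) volume a x :=
      (Continuous.intervalIntegrable (by continuity) a x)
    have := intervalIntegral.integral_eq_sub_of_hasDeriv_right_of_le hax.le hcont hderiv hint
    rw [taylorWithinEval_self] at this
    rw [intervalIntegral.integral_const_mul] at this
    have h120 : ((120:ℝ))⁻¹ = 1/120 := by norm_num
    rw [h120] at this
    linarith [this]


private lemma bp_core_scaled (s c u : ℝ) (hs : s^2 = 15) (hs0 : 0 ≤ s) (hsu : s < 3.873)
    (hc : 0 < c) (h1 : (5-s)/10*c ≤ u) (h2 : u ≤ c/2) :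
    5*(c*(u-(5-s)/10*c)^5) ≤ 3*u^6 := by
  have hc' : c ≠ 0 := ne_of_gt hc
  have hw1 : (5-s)/10 ≤ u/c := by rw [le_div_iff₀ hc]; linarith
  have hw2 : u/c ≤ 1/2 := by rw [div_le_iff₀ hc]; linarith
  have hcore := bp_core s (u/c) hs hs0 hsu hw1 hw2
  have hscale := mul_le_mul_of_nonneg_right hcore (le_of_lt (pow_pos hc 6))
  have e1 : (u/c-(5-s)/10)^5*c^6 = c*(u-(5-s)/10*c)^5 := by
    field_simp
  have e2 : (u/c)^6*c^6 = u^6 := by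
    field_simp
  calc 5*(c*(u-(5-s)/10*c)^5) = 5*(u/c-(5-s)/10)^5*c^6 := by rw [mul_assoc, e1]
  _ ≤ 3*(u/c)^6*c^6 := hscale
  _ = 3*u^6 := by rw [mul_assoc, e2]

private lemma bp_KG0 (s a b t : ℝ) (hs : s^2 = 15) (hs0 : 0 ≤ s) (hsu : s < 3.873)
    (hab : a < b) (ht : t ∈ Set.Icc a b) :
    0 ≤ (b-t)^6/6 - (b-a)/18*(5*(max ((5+s)/10*a + (5-s)/10*b - t) 0)^5
        + 8*(max ((a+b)/2 - t) 0)^5 + 5*(max ((5-s)/10*a + (5+s)/10*b - t) 0)^5) := by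
  have hc : 0 < b - a := sub_pos.2 hab
  have hsb : 0 ≤ s*(b-a) := mul_nonneg hs0 hc.le
  rcases le_total t ((5+s)/10*a + (5-s)/10*b) with h1 | h1
  · rw [max_eq_left (by linarith : (0:ℝ) ≤ (5+s)/10*a + (5-s)/10*b - t),
      max_eq_left (by linarith [hsb] : (0:ℝ) ≤ (a+b)/2 - t),
      max_eq_left (by linarith [hsb] : (0:ℝ) ≤ (5-s)/10*a + (5+s)/10*b - t)]
    have hid := bp_idG0 s (b-a) (t-a) hs
    have h6 : (0:ℝ) ≤ (t-a)^6 := by positivity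
    linarith [hid, h6]
  · rw [max_eq_right (by linarith : (5+s)/10*a + (5-s)/10*b - t ≤ (0:ℝ))]
    rcases le_total t ((a+b)/2) with h2 | h2
    · rw [max_eq_left (by linarith : (0:ℝ) ≤ (a+b)/2 - t),
        max_eq_left (by linarith [hsb] : (0:ℝ) ≤ (5-s)/10*a + (5+s)/10*b - t)]
      have hid := bp_idG s (b-a) (t-a) hs
      have h5c := bp_core_scaled s (b-a) (t-a) hs hs0 hsu hc (by linarith) (by linarith)
      linarith [hid, h5c]
    · rw [max_eq_right (by linarith : (a+b)/2 - t ≤ (0:ℝ))]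
      rcases le_total t ((5-s)/10*a + (5+s)/10*b) with h3 | h3
      · rw [max_eq_left (by linarith : (0:ℝ) ≤ (5-s)/10*a + (5+s)/10*b - t)]
        have h5c := bp_core_scaled s (b-a) (b-t) hs hs0 hsu hc (by linarith) (by linarith)
        linarith [h5c]
      · rw [max_eq_right (by linarith : (5-s)/10*a + (5+s)/10*b - t ≤ (0:ℝ))]
        have h6 : (0:ℝ) ≤ (b-t)^6 := by positivity
        linarith [h6]

private lemma bp_KL0 (p a b t : ℝ) (hp : p^2 = 5) (hp0 : 0 ≤ p) (hpu : p < 2.2361)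
    (hab : a < b) (ht : t ∈ Set.Icc a b) :
    0 ≤ (b-a)/12*(5*(max ((5+p)/10*a + (5-p)/10*b - t) 0)^5
      + 5*(max ((5-p)/10*a + (5+p)/10*b - t) 0)^5 + (b-t)^5) - (b-t)^6/6 := by
  have hc : 0 < b - a := sub_pos.2 hab
  have hpb : 0 ≤ p*(b-a) := mul_nonneg hp0 hc.le
  rcases le_total t ((5+p)/10*a + (5-p)/10*b) with h1 | h1
  · rw [max_eq_left (by linarith : (0:ℝ) ≤ (5+p)/10*a + (5-p)/10*b - t),
      max_eq_left (by linarith [hpb] : (0:ℝ) ≤ (5-p)/10*a + (5+p)/10*b - t)]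
    have hid := bp_idL0 p (b-a) (t-a) hp
    have h1' : 0 ≤ (t-a)^5*((b-a)-2*(t-a)) :=
      mul_nonneg (pow_nonneg (by linarith [ht.1]) 5) (by linarith [hpb])
    linarith [hid, h1']
  · rw [max_eq_right (by linarith : (5+p)/10*a + (5-p)/10*b - t ≤ (0:ℝ))]
    rcases le_total t ((5-p)/10*a + (5+p)/10*b) with h2 | h2
    · rw [max_eq_left (by linarith : (0:ℝ) ≤ (5-p)/10*a + (5+p)/10*b - t)]
      rcases le_total t ((a+b)/2) with h3 | h3
      · have hid := bp_idL1 p (b-a) (t-a) hp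
        have hA : 0 ≤ (t-a)^5*((b-a)-2*(t-a)) :=
          mul_nonneg (pow_nonneg (by linarith [ht.1]) 5) (by linarith)
        have hB : 0 ≤ (b-a)*((t-a)-(5-p)/10*(b-a))^5 :=
          mul_nonneg hc.le (pow_nonneg (by linarith) 5)
        linarith [hid, hA, hB]
      · have hA : 0 ≤ (b-t)^5*((b-a)-2*(b-t)) :=
          mul_nonneg (pow_nonneg (by linarith [ht.2]) 5) (by linarith)
        have hB : 0 ≤ (b-a)*((5-p)/10*a + (5+p)/10*b - t)^5 :=
          mul_nonneg hc.le (pow_nonneg (by linarith) 5)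
        linarith [hA, hB]
    · rw [max_eq_right (by linarith : (5-p)/10*a + (5+p)/10*b - t ≤ (0:ℝ))]
      have hA : 0 ≤ (b-t)^5*((b-a)-2*(b-t)) :=
        mul_nonneg (pow_nonneg (by linarith [ht.2]) 5) (by linarith [hpb])
      linarith [hA]

private lemma bp_Tpoly {a b : ℝ} (f : ℝ → ℝ) (x : ℝ) :
    taylorWithinEval f 5 (Set.Icc a b) a x =
      iteratedDerivWithin 0 f (Set.Icc a b) a
      + iteratedDerivWithin 1 f (Set.Icc a b) a * (x-a)
      + iteratedDerivWithin 2 f (Set.Icc a b) a * (x-a)^2/2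
      + iteratedDerivWithin 3 f (Set.Icc a b) a * (x-a)^3/6
      + iteratedDerivWithin 4 f (Set.Icc a b) a * (x-a)^4/24
      + iteratedDerivWithin 5 f (Set.Icc a b) a * (x-a)^5/120 := by
  rw [taylor_within_apply]
  simp only [Finset.sum_range_succ, Finset.sum_range_zero, smul_eq_mul, zero_add]
  norm_num [Nat.factorial]
  ring

private lemma bp_rhomax (hg : Continuous g) {a b y : ℝ} (hy : y ∈ Set.Icc a b) :
    (∫ t in a..y, (y-t)^5 * g t) = ∫ t in a..b, (max (y-t) 0)^5 * g t := by
  have hmc : Continuous (fun t => (max (y-t) 0)^5 * g t) :=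
    (((continuous_const.sub continuous_id).max continuous_const).pow 5).mul hg
  have hsplit : (∫ t in a..y, (max (y-t) 0)^5 * g t) + (∫ t in y..b, (max (y-t) 0)^5 * g t)
      = ∫ t in a..b, (max (y-t) 0)^5 * g t :=
    intervalIntegral.integral_add_adjacent_intervals
      (hmc.intervalIntegrable a y) (hmc.intervalIntegrable y b)
  have e1 : (∫ t in a..y, (max (y-t) 0)^5 * g t) = ∫ t in a..y, (y-t)^5 * g t :=
    intervalIntegral.integral_congr (fun t ht => by
      rw [Set.uIcc_of_le hy.1] at ht
      rw [max_eq_left (by linarith [ht.2] : (0:ℝ) ≤ y - t)])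
  have e2 : (∫ t in y..b, (max (y-t) 0)^5 * g t) = 0 := by
    have h0 : Set.EqOn (fun t => (max (y-t) 0)^5 * g t) (fun _ => 0) (Set.uIcc y b) := by
      intro t ht
      rw [Set.uIcc_of_le hy.2] at ht
      simp only
      rw [max_eq_right (by linarith [ht.1] : y - t ≤ (0:ℝ))]
      ring
    rw [intervalIntegral.integral_congr h0, intervalIntegral.integral_zero]
  rw [← hsplit, e1, e2, add_zero]



private lemma bp_Gsplit (hg : Continuous g) (a b W x1 x2 x3 : ℝ) :
    (∫ t in a..b, (b-t)^6/6 * g t)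
      - W*(5*(∫ t in a..b, (max (x1-t) 0)^5 * g t) + 8*(∫ t in a..b, (max (x2-t) 0)^5 * g t)
        + 5*(∫ t in a..b, (max (x3-t) 0)^5 * g t))
    = ∫ t in a..b, ((b-t)^6/6 - W*(5*(max (x1-t) 0)^5 + 8*(max (x2-t) 0)^5
        + 5*(max (x3-t) 0)^5)) * g t := by
  have hmx : ∀ y : ℝ, Continuous (fun t => (max (y-t) 0)^5 * g t) :=
    fun y => (((continuous_const.sub continuous_id).max continuous_const).pow 5).mul hg
  have hm0 : Continuous (fun t => (b-t)^6/6 * g t) := by fun_prop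
  have i0 := hm0.intervalIntegrable (μ := volume) a b
  have i1 := ((hmx x1).intervalIntegrable (μ := volume) a b).const_mul (-(W*5))
  have i2 := ((hmx x2).intervalIntegrable (μ := volume) a b).const_mul (-(W*8))
  have i3 := ((hmx x3).intervalIntegrable (μ := volume) a b).const_mul (-(W*5))
  have e : (fun t => ((b-t)^6/6 - W*(5*(max (x1-t) 0)^5 + 8*(max (x2-t) 0)^5
        + 5*(max (x3-t) 0)^5)) * g t) = fun t => (b-t)^6/6 * g t
      + (-(W*5))*((max (x1-t) 0)^5 * g t)
      + (-(W*8))*((max (x2-t) 0)^5 * g t)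
      + (-(W*5))*((max (x3-t) 0)^5 * g t) := funext fun t => by ring
  rw [e]
  rw [intervalIntegral.integral_add ((i0.add i1).add i2) i3]
  rw [intervalIntegral.integral_add (i0.add i1) i2]
  rw [intervalIntegral.integral_add i0 i1]
  simp only [intervalIntegral.integral_const_mul]
  ring

private lemma bp_Lsplit (hg : Continuous g) (a b W y1 y2 : ℝ) :
    W*(5*(∫ t in a..b, (max (y1-t) 0)^5 * g t) + 5*(∫ t in a..b, (max (y2-t) 0)^5 * g t)
      + (∫ t in a..b, (b-t)^5 * g t)) - (∫ t in a..b, (b-t)^6/6 * g t)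
    = ∫ t in a..b, (W*(5*(max (y1-t) 0)^5 + 5*(max (y2-t) 0)^5 + (b-t)^5) - (b-t)^6/6) * g t := by
  have hmx : ∀ y : ℝ, Continuous (fun t => (max (y-t) 0)^5 * g t) :=
    fun y => (((continuous_const.sub continuous_id).max continuous_const).pow 5).mul hg
  have hm0 : Continuous (fun t => (b-t)^6/6 * g t) := by fun_prop
  have hm4 : Continuous (fun t => (b-t)^5 * g t) := by fun_prop
  have i0 := (hm0.intervalIntegrable (μ := volume) a b).const_mul (-1 : ℝ)
  have i1 := ((hmx y1).intervalIntegrable (μ := volume) a b).const_mul (W*5)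
  have i2 := ((hmx y2).intervalIntegrable (μ := volume) a b).const_mul (W*5)
  have i4 := (hm4.intervalIntegrable (μ := volume) a b).const_mul W
  have e : (fun t => (W*(5*(max (y1-t) 0)^5 + 5*(max (y2-t) 0)^5 + (b-t)^5) - (b-t)^6/6) * g t)
      = fun t => (-1 : ℝ)*((b-t)^6/6 * g t)
      + (W*5)*((max (y1-t) 0)^5 * g t)
      + (W*5)*((max (y2-t) 0)^5 * g t)
      + W*((b-t)^5 * g t) := funext fun t => by ring
  rw [e]
  rw [intervalIntegral.integral_add ((i0.add i1).add i2) i4]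
  rw [intervalIntegral.integral_add (i0.add i1) i2]
  rw [intervalIntegral.integral_add i0 i1]
  simp only [intervalIntegral.integral_const_mul]
  ring

private lemma bp_intT {a b : ℝ} (f : ℝ → ℝ) :
    (∫ x in a..b, taylorWithinEval f 5 (Set.Icc a b) a x) =
      iteratedDerivWithin 0 f (Set.Icc a b) a * (b-a)
      + iteratedDerivWithin 1 f (Set.Icc a b) a * (b-a)^2/2
      + iteratedDerivWithin 2 f (Set.Icc a b) a * (b-a)^3/6
      + iteratedDerivWithin 3 f (Set.Icc a b) a * (b-a)^4/24
      + iteratedDerivWithin 4 f (Set.Icc a b) a * (b-a)^5/120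
      + iteratedDerivWithin 5 f (Set.Icc a b) a * (b-a)^6/720 := by
  have hpow : ∀ k : ℕ, (∫ x in a..b, (x-a)^k) = (b-a)^(k+1)/(k+1) := by
    intro k
    rw [show (fun x => (x-a)^k) = fun x => (fun u => u^k) (x - a) from rfl,
      intervalIntegral.integral_comp_sub_right (fun u => u^k) a, sub_self, integral_pow]
    norm_num
  have hB : ∀ (q : ℝ) (k : ℕ), IntervalIntegrable (fun x => q*(x-a)^k) volume a b :=
    fun q k => (continuous_const.mul ((continuous_id.sub continuous_const).pow k)).intervalIntegrable a b
  set D0 := iteratedDerivWithin 0 f (Set.Icc a b) a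
  set D1 := iteratedDerivWithin 1 f (Set.Icc a b) a
  set D2 := iteratedDerivWithin 2 f (Set.Icc a b) a
  set D3 := iteratedDerivWithin 3 f (Set.Icc a b) a
  set D4 := iteratedDerivWithin 4 f (Set.Icc a b) a
  set D5 := iteratedDerivWithin 5 f (Set.Icc a b) a
  have i0 := hB D0 0; have i1 := hB D1 1; have i2 := hB (D2/2) 2
  have i3 := hB (D3/6) 3; have i4 := hB (D4/24) 4; have i5 := hB (D5/120) 5
  have e : (fun x => taylorWithinEval f 5 (Set.Icc a b) a x)
      = fun x => D0*(x-a)^0 + D1*(x-a)^1 + (D2/2)*(x-a)^2 + (D3/6)*(x-a)^3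
        + (D4/24)*(x-a)^4 + (D5/120)*(x-a)^5 :=
    funext fun x => by rw [bp_Tpoly f x]; ring
  rw [e]
  rw [intervalIntegral.integral_add ((((i0.add i1).add i2).add i3).add i4) i5]
  rw [intervalIntegral.integral_add (((i0.add i1).add i2).add i3) i4]
  rw [intervalIntegral.integral_add ((i0.add i1).add i2) i3]
  rw [intervalIntegral.integral_add (i0.add i1) i2]
  rw [intervalIntegral.integral_add i0 i1]
  simp only [intervalIntegral.integral_const_mul]
  rw [hpow 0, hpow 1, hpow 2, hpow 3, hpow 4, hpow 5]
  push_cast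
  ring

end BP_aux

set_option maxHeartbeats 2000000 in
theorem bessenyei_pales (a b : ℝ) (hab : a < b) (f : ℝ → ℝ)
    (hf : ContDiffOn ℝ 6 f (Set.Icc a b))
    (hpos : ∀ x ∈ Set.Icc a b, 0 ≤ iteratedDerivWithin 6 f (Set.Icc a b) x) :
    gaussQ f a b ≤ (∫ x in a..b, f x) ∧ (∫ x in a..b, f x) ≤ lobattoQ f a b := by
  have hc : 0 < b - a := sub_pos.2 hab
  set s : ℝ := Real.sqrt 15 with hsdef
  set p : ℝ := Real.sqrt 5 with hpdef
  have hs2 : s^2 = 15 := Real.sq_sqrt (by norm_num)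
  have hp2 : p^2 = 5 := Real.sq_sqrt (by norm_num)
  have hs0 : 0 ≤ s := Real.sqrt_nonneg 15
  have hp0 : 0 ≤ p := Real.sqrt_nonneg 5
  have hsu : s < 3.873 := by nlinarith
  have hpu : p < 2.2361 := by nlinarith
  have hsb : 0 ≤ s*(b-a) := mul_nonneg hs0 hc.le
  have hpb : 0 ≤ p*(b-a) := mul_nonneg hp0 hc.le
  -- the (extended) 6th derivative
  have hIu : UniqueDiffOn ℝ (Set.Icc a b) := uniqueDiffOn_Icc hab
  have hhc : ContinuousOn (iteratedDerivWithin 6 f (Set.Icc a b)) (Set.Icc a b) :=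
    hf.continuousOn_iteratedDerivWithin (by norm_num) hIu
  set g : ℝ → ℝ := fun t => iteratedDerivWithin 6 f (Set.Icc a b) (max a (min b t)) with hgdef
  have hproj : ∀ t, max a (min b t) ∈ Set.Icc a b :=
    fun t => ⟨le_max_left _ _, max_le hab.le (min_le_left _ _)⟩
  have hgc : Continuous g :=
    hhc.comp_continuous (continuous_const.max (continuous_const.min continuous_id)) hproj
  have hg0 : ∀ t, 0 ≤ g t := fun t => hpos _ (hproj t)
  have hgh : ∀ t ∈ Set.Icc a b, g t = iteratedDerivWithin 6 f (Set.Icc a b) t := by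
    intro t ht
    rw [hgdef]
    simp only
    rw [min_eq_right ht.2, max_eq_right ht.1]
  set T : ℝ → ℝ := fun x => taylorWithinEval f 5 (Set.Icc a b) a x with hTdef
  set ρ : ℝ → ℝ := fun x => ∫ t in a..x, (x-t)^5 * g t with hρdef
  have hTayl : ∀ x ∈ Set.Icc a b, f x = T x + (1/120) * ρ x :=
    fun x hx => bp_taylor_int hab hf hgc hgh hx
  have hTcont : Continuous T := by
    rw [show T = fun x => iteratedDerivWithin 0 f (Set.Icc a b) a
      + iteratedDerivWithin 1 f (Set.Icc a b) a * (x-a)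
      + iteratedDerivWithin 2 f (Set.Icc a b) a * (x-a)^2/2
      + iteratedDerivWithin 3 f (Set.Icc a b) a * (x-a)^3/6
      + iteratedDerivWithin 4 f (Set.Icc a b) a * (x-a)^4/24
      + iteratedDerivWithin 5 f (Set.Icc a b) a * (x-a)^5/120
      from funext fun x => bp_Tpoly f x]
    fun_prop
  have hρcont : Continuous ρ := bp_rhoCont hgc a
  have hW : (∫ x in a..b, f x) = (∫ x in a..b, T x) + (1/120) * ∫ t in a..b, (b-t)^6/6 * g t := by
    have e1 : (∫ x in a..b, f x) = ∫ x in a..b, (T x + (1/120) * ρ x) :=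
      intervalIntegral.integral_congr
        (fun x hx => hTayl x (by rwa [Set.uIcc_of_le hab.le] at hx))
    rw [e1, intervalIntegral.integral_add (hTcont.intervalIntegrable a b)
      ((hρcont.intervalIntegrable (μ := volume) a b).const_mul (1/120)),
      intervalIntegral.integral_const_mul]
    congr 1
    rw [mul_eq_mul_left_iff]
    left
    exact bp_remInt hgc a b
  have hρmax : ∀ y ∈ Set.Icc a b, ρ y = ∫ t in a..b, (max (y-t) 0)^5 * g t := by
    intro y hy
    rw [hρdef]
    simp only
    exact bp_rhomax hgc hy
  -- Gauss
  have hx1I : (5+s)/10*a + (5-s)/10*b ∈ Set.Icc a b := ⟨by nlinarith, by nlinarith⟩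
  have hx2I : (a+b)/2 ∈ Set.Icc a b := ⟨by linarith, by linarith⟩
  have hx3I : (5-s)/10*a + (5+s)/10*b ∈ Set.Icc a b := ⟨by nlinarith, by nlinarith⟩
  have hGsplit := bp_Gsplit hgc a b ((b-a)/18) ((5+s)/10*a + (5-s)/10*b) ((a+b)/2)
    ((5-s)/10*a + (5+s)/10*b)
  rw [← hρmax _ hx1I, ← hρmax _ hx2I, ← hρmax _ hx3I] at hGsplit
  have hGpos : 0 ≤ (∫ t in a..b, (b-t)^6/6 * g t)
      - (b-a)/18*(5*ρ ((5+s)/10*a + (5-s)/10*b) + 8*ρ ((a+b)/2)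
        + 5*ρ ((5-s)/10*a + (5+s)/10*b)) := by
    rw [hGsplit]
    apply intervalIntegral.integral_nonneg hab.le
    intro t ht
    exact mul_nonneg (bp_KG0 s a b t hs2 hs0 hsu hab ht) (hg0 t)
  have hGq : gaussQ f a b = gaussQ T a b
      + (1/120)*((b-a)/18*(5*ρ ((5+s)/10*a + (5-s)/10*b) + 8*ρ ((a+b)/2)
        + 5*ρ ((5-s)/10*a + (5+s)/10*b))) := by
    simp only [gaussQ, ← hsdef]
    rw [hTayl _ hx1I, hTayl _ hx2I, hTayl _ hx3I]
    ring
  have hGex : gaussQ T a b = ∫ x in a..b, T x := by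
    rw [hTdef]
    simp only
    rw [bp_intT f]
    simp only [gaussQ, ← hsdef]
    rw [bp_Tpoly f, bp_Tpoly f, bp_Tpoly f]
    linear_combination -(bp_gauss_exact s (b-a)
      (iteratedDerivWithin 0 f (Set.Icc a b) a) (iteratedDerivWithin 1 f (Set.Icc a b) a)
      (iteratedDerivWithin 2 f (Set.Icc a b) a) (iteratedDerivWithin 3 f (Set.Icc a b) a)
      (iteratedDerivWithin 4 f (Set.Icc a b) a) (iteratedDerivWithin 5 f (Set.Icc a b) a) hs2)
  -- Lobatto
  have hy1I : (5+p)/10*a + (5-p)/10*b ∈ Set.Icc a b := ⟨by nlinarith, by nlinarith⟩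
  have hy2I : (5-p)/10*a + (5+p)/10*b ∈ Set.Icc a b := ⟨by nlinarith, by nlinarith⟩
  have hρa : ρ a = 0 := by
    rw [hρdef]; simp
  have hρb : ρ b = ∫ t in a..b, (b-t)^5 * g t := by rw [hρdef]
  have hLsplit := bp_Lsplit hgc a b ((b-a)/12) ((5+p)/10*a + (5-p)/10*b)
    ((5-p)/10*a + (5+p)/10*b)
  rw [← hρmax _ hy1I, ← hρmax _ hy2I, ← hρb] at hLsplit
  have hLpos : 0 ≤ (b-a)/12*(5*ρ ((5+p)/10*a + (5-p)/10*b) + 5*ρ ((5-p)/10*a + (5+p)/10*b) + ρ b)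
      - (∫ t in a..b, (b-t)^6/6 * g t) := by
    rw [hLsplit]
    apply intervalIntegral.integral_nonneg hab.le
    intro t ht
    exact mul_nonneg (bp_KL0 p a b t hp2 hp0 hpu hab ht) (hg0 t)
  have hLq : lobattoQ f a b = lobattoQ T a b
      + (1/120)*((b-a)/12*(5*ρ ((5+p)/10*a + (5-p)/10*b) + 5*ρ ((5-p)/10*a + (5+p)/10*b) + ρ b)) := by
    simp only [lobattoQ, ← hpdef]
    rw [hTayl _ hy1I, hTayl _ hy2I, hTayl a ⟨le_refl a, hab.le⟩, hTayl b ⟨hab.le, le_refl b⟩, hρa]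
    ring
  have hLex : lobattoQ T a b = ∫ x in a..b, T x := by
    rw [hTdef]
    simp only
    rw [bp_intT f]
    simp only [lobattoQ, ← hpdef]
    rw [bp_Tpoly f, bp_Tpoly f, bp_Tpoly f, bp_Tpoly f]
    linear_combination -(bp_lobatto_exact p (b-a)
      (iteratedDerivWithin 0 f (Set.Icc a b) a) (iteratedDerivWithin 1 f (Set.Icc a b) a)
      (iteratedDerivWithin 2 f (Set.Icc a b) a) (iteratedDerivWithin 3 f (Set.Icc a b) a)
      (iteratedDerivWithin 4 f (Set.Icc a b) a) (iteratedDerivWithin 5 f (Set.Icc a b) a) hp2)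
  constructor
  · linarith [hGpos, hGq, hGex, hW]
  · linarith [hLpos, hLq, hLex, hW]
end

section
/- If f : [−1,1] → ℝ is of class C^6 with f⁽⁶⁾ ≥ 0 on [−1,1], then 0 ≤ ∫_{−1}^1 f(x) dx − G[f;−1,1] ≤ L[f;−1,1] − ∫_{−1}^1 f(x) dx, i.e., the Gauss error is bounded by the Lobatto error. -/
open MeasureTheory intervalIntegral

section Aux

lemma pow5_mono {a b : ℝ} (h : a ≤ b) : a^5 ≤ b^5 :=
  (Odd.strictMono_pow (R := ℝ) ⟨2, by norm_num⟩).monotone h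

lemma q1rat (u : ℝ) (hu0 : 0 ≤ u) (hu1 : u ≤ 4472140/10000000) :
    0 ≤ 5/9*(77459/100000-u)^5 + 5/6*(447213/1000000-u)^5 + 1/6*(1-u)^5 - 1/3*(1-u)^6 := by
  nlinarith [mul_nonneg hu0 (sub_nonneg.2 hu1), sq_nonneg u, sq_nonneg (u*(4472140/10000000-u)),
    mul_nonneg (mul_nonneg hu0 hu0) hu0, sq_nonneg (u^2), sq_nonneg (u^2 - u/4),
    mul_nonneg (sq_nonneg u) (sub_nonneg.2 hu1), mul_nonneg (sq_nonneg (u*u)) (sub_nonneg.2 hu1)]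

lemma q2rat (u : ℝ) (hu0 : 4472/10000 ≤ u) (hu1 : u ≤ 1/2) :
    0 ≤ 5/9*(77459/100000-u)^5 + 1/6*(1-u)^5 - 1/3*(1-u)^6 := by
  nlinarith [mul_nonneg (sub_nonneg.2 hu0) (sub_nonneg.2 hu1), sq_nonneg (u-1/2),
    sq_nonneg ((u-1/2)*(u-4472/10000)), sq_nonneg (u-4472/10000)]

lemma endpiece (v : ℝ) (h0 : 0 ≤ v) (h1 : v ≤ 1/2) : 0 ≤ 1/6*v^5 - 1/3*v^6 := by
  nlinarith [pow_nonneg h0 5]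

lemma K1piece (s u : ℝ) (hs : s^2 = 15) (hs0 : 0 ≤ s) (hu1 : u ≤ s/5) :
    0 ≤ (1-u)^6/6 - 5/9*(s/5-u)^5 := by
  have hbl : (2233/10000:ℝ) ≤ 1 - s/5 := by nlinarith
  have hw0 : 0 ≤ s/5 - u := by linarith
  have hb0 : (0:ℝ) ≤ 1 - s/5 := by linarith
  have h2 : 0 ≤ ((s/5-u)-5*(1-s/5))^2 * ((s/5-u)^4 + 3344/3125*(1-s/5)*(s/5-u)^3
      + 438/625*(1-s/5)^2*(s/5-u)^2 + 32/125*(1-s/5)^3*(s/5-u) + 1/25*(1-s/5)^4) := by positivity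
  have h3 : ∀ w b : ℝ, (w+b)^6 - (46656/3125)*b*w^5 = (w-5*b)^2 *
      (w^4 + 3344/3125*b*w^3 + 438/625*b^2*w^2 + 32/125*b^3*w + 1/25*b^4) := by intros; ring
  have h4 := mul_le_mul_of_nonneg_right hbl (pow_nonneg hw0 5)
  have h5 := h3 (s/5-u) (1-s/5)
  nlinarith [pow_nonneg hw0 5]

lemma q1s (s r u : ℝ) (hs : s^2 = 15) (hr : r^2 = 5) (hs0 : 0 ≤ s) (hr0 : 0 ≤ r)
    (hu0 : 0 ≤ u) (hu1 : u ≤ r/5) :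
    0 ≤ 5/9*(s/5-u)^5 + 5/6*(r/5-u)^5 + 1/6*(1-u)^5 - 1/3*(1-u)^6 := by
  have hsl : (387298/100000:ℝ) ≤ s := by nlinarith
  have hrl : (2236067/1000000:ℝ) ≤ r := by nlinarith
  have hru : r ≤ 223607/100000 := by nlinarith
  have b1 : (77459/100000 - u:ℝ)^5 ≤ (s/5-u)^5 := pow5_mono (by linarith)
  have b2 : (447213/1000000 - u:ℝ)^5 ≤ (r/5-u)^5 := pow5_mono (by linarith)
  have := q1rat u hu0 (by linarith)
  linarith

lemma q2s (s u : ℝ) (hs : s^2 = 15) (hs0 : 0 ≤ s) (hu0 : 4472/10000 ≤ u) (hu1 : u ≤ s/5) :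
    0 ≤ 5/9*(s/5-u)^5 + 1/6*(1-u)^5 - 1/3*(1-u)^6 := by
  rcases le_or_gt u (1/2) with h | h
  · have hsl : (387298/100000:ℝ) ≤ s := by nlinarith
    have b1 : (77459/100000 - u:ℝ)^5 ≤ (s/5-u)^5 := pow5_mono (by linarith)
    have := q2rat u hu0 h
    linarith
  · have h1 : 0 ≤ s/5 - u := by linarith
    have h2 : (0:ℝ) ≤ 1 - u := by nlinarith
    have h3 : (1-u:ℝ) ≤ 1/2 := by linarith
    have := endpiece (1-u) h2 h3
    nlinarith [pow_nonneg h1 5]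

lemma K1_nonneg (t : ℝ) (ht1 : -1 ≤ t) (ht2 : t ≤ 1) :
    0 ≤ (1-t)^6/6 - 1/9*(5*(max (-(Real.sqrt 15)/5 - t) 0)^5 + 8*(max (-t) 0)^5
      + 5*(max (Real.sqrt 15/5 - t) 0)^5) := by
  set s := Real.sqrt 15 with hsdef
  have hs : s^2 = 15 := Real.sq_sqrt (by norm_num)
  have hs0 : 0 ≤ s := Real.sqrt_nonneg 15
  have hs5 : s ≤ 5 := by nlinarith
  rcases le_or_gt t (-(s/5)) with h1 | h1
  · rw [max_eq_left (by linarith : (0:ℝ) ≤ -s/5 - t), max_eq_left (by linarith : (0:ℝ) ≤ -t),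
      max_eq_left (by linarith : (0:ℝ) ≤ s/5 - t)]
    have key : (1-t)^6/6 - 1/9*(5*(-s/5 - t)^5 + 8*(-t)^5 + 5*(s/5 - t)^5) = (1+t)^6/6 := by
      linear_combination ((2/15:ℝ) * t + (2/225:ℝ) * t * s^2 + (4/9:ℝ) * t^3) * hs
    rw [key]; positivity
  · rcases le_or_gt t 0 with h2 | h2
    · rw [max_eq_right (by linarith : -s/5 - t ≤ (0:ℝ)), max_eq_left (by linarith : (0:ℝ) ≤ -t),
        max_eq_left (by linarith : (0:ℝ) ≤ s/5 - t)]
      have h := K1piece s (-t) hs hs0 (by linarith)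
      have key : (1-t)^6/6 - 1/9*(5*(0:ℝ)^5 + 8*(-t)^5 + 5*(s/5 - t)^5)
          = (1-(-t))^6/6 - 5/9*(s/5-(-t))^5
          + ((2/15:ℝ) * t + (2/225:ℝ) * t * s^2 + (4/9:ℝ) * t^3) * (s^2 - 15) := by ring
      rw [key, hs]; linarith
    · rcases le_or_gt t (s/5) with h3 | h3
      · rw [max_eq_right (by linarith : -s/5 - t ≤ (0:ℝ)), max_eq_right (by linarith : -t ≤ (0:ℝ)),
          max_eq_left (by linarith : (0:ℝ) ≤ s/5 - t)]
        have h := K1piece s t hs hs0 h3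
        have key : (1-t)^6/6 - 1/9*(5*(0:ℝ)^5 + 8*(0:ℝ)^5 + 5*(s/5 - t)^5)
            = (1-t)^6/6 - 5/9*(s/5-t)^5 := by ring
        rw [key]; linarith
      · rw [max_eq_right (by linarith : -s/5 - t ≤ (0:ℝ)), max_eq_right (by linarith : -t ≤ (0:ℝ)),
          max_eq_right (by linarith : s/5 - t ≤ (0:ℝ))]
        have : (0:ℝ)^5 = 0 := by norm_num
        rw [this]; norm_num; positivity

lemma K2_nonneg (t : ℝ) (ht1 : -1 ≤ t) (ht2 : t ≤ 1) :
    0 ≤ 1/9*(5*(max (-(Real.sqrt 15)/5 - t) 0)^5 + 8*(max (-t) 0)^5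
        + 5*(max (Real.sqrt 15/5 - t) 0)^5)
      + 1/6*((max (-1 - t) 0)^5 + 5*(max (-(Real.sqrt 5)/5 - t) 0)^5
        + 5*(max (Real.sqrt 5/5 - t) 0)^5 + (max (1 - t) 0)^5)
      - 1/3*(1-t)^6 := by
  set s := Real.sqrt 15 with hsdef
  set r := Real.sqrt 5 with hrdef
  have hs : s^2 = 15 := Real.sq_sqrt (by norm_num)
  have hr : r^2 = 5 := Real.sq_sqrt (by norm_num)
  have hs0 : 0 ≤ s := Real.sqrt_nonneg 15
  have hr0 : 0 ≤ r := Real.sqrt_nonneg 5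
  have hs5 : s ≤ 4 := by nlinarith
  have hsl : (387298/100000:ℝ) ≤ s := by nlinarith
  have hrl : (2236067/1000000:ℝ) ≤ r := by nlinarith
  have hru : r ≤ 223607/100000 := by nlinarith
  have hrs : r ≤ s := by nlinarith
  have e1 : max (-1 - t) 0 = 0 := max_eq_right (by linarith)
  have e2 : max (1 - t) 0 = 1 - t := max_eq_left (by linarith)
  rw [e1, e2]
  rcases le_or_gt t (-(s/5)) with h1 | h1
  · rw [max_eq_left (by linarith : (0:ℝ) ≤ -s/5 - t), max_eq_left (by linarith : (0:ℝ) ≤ -t),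
      max_eq_left (by linarith : (0:ℝ) ≤ s/5 - t),
      max_eq_left (by linarith : (0:ℝ) ≤ -r/5 - t), max_eq_left (by linarith : (0:ℝ) ≤ r/5 - t)]
    have key : 1/9*(5*(-s/5 - t)^5 + 8*(-t)^5 + 5*(s/5 - t)^5)
        + 1/6*((0:ℝ)^5 + 5*(-r/5 - t)^5 + 5*(r/5 - t)^5 + (1 - t)^5) - 1/3*(1-t)^6
        = 1/6*(1+t)^5 - 1/3*(1+t)^6 := by
      linear_combination ((-2/15:ℝ) * t + (-2/225:ℝ) * t * s^2 + (-4/9:ℝ) * t^3) * hs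
        + ((-1/15:ℝ) * t + (-1/75:ℝ) * t * r^2 + (-2/3:ℝ) * t^3) * hr
    rw [key]
    exact endpiece (1+t) (by linarith) (by linarith)
  · rcases le_or_gt t (-(r/5)) with h2 | h2
    · rw [max_eq_right (by linarith : -s/5 - t ≤ (0:ℝ)), max_eq_left (by linarith : (0:ℝ) ≤ -t),
        max_eq_left (by linarith : (0:ℝ) ≤ s/5 - t),
        max_eq_left (by linarith : (0:ℝ) ≤ -r/5 - t), max_eq_left (by linarith : (0:ℝ) ≤ r/5 - t)]
      have key : 1/9*(5*(0:ℝ)^5 + 8*(-t)^5 + 5*(s/5 - t)^5)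
          + 1/6*((0:ℝ)^5 + 5*(-r/5 - t)^5 + 5*(r/5 - t)^5 + (1 - t)^5) - 1/3*(1-t)^6
          = 5/9*(s/5-(-t))^5 + 1/6*(1-(-t))^5 - 1/3*(1-(-t))^6 := by
        linear_combination ((-2/15:ℝ) * t + (-2/225:ℝ) * t * s^2 + (-4/9:ℝ) * t^3) * hs
          + ((-1/15:ℝ) * t + (-1/75:ℝ) * t * r^2 + (-2/3:ℝ) * t^3) * hr
      rw [key]
      exact q2s s (-t) hs hs0 (by linarith) (by linarith)
    · rcases le_or_gt t 0 with h3 | h3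
      · rw [max_eq_right (by linarith : -s/5 - t ≤ (0:ℝ)), max_eq_left (by linarith : (0:ℝ) ≤ -t),
          max_eq_left (by linarith : (0:ℝ) ≤ s/5 - t),
          max_eq_right (by linarith : -r/5 - t ≤ (0:ℝ)), max_eq_left (by linarith : (0:ℝ) ≤ r/5 - t)]
        have key : 1/9*(5*(0:ℝ)^5 + 8*(-t)^5 + 5*(s/5 - t)^5)
            + 1/6*((0:ℝ)^5 + 5*(0:ℝ)^5 + 5*(r/5 - t)^5 + (1 - t)^5) - 1/3*(1-t)^6
            = 5/9*(s/5-(-t))^5 + 5/6*(r/5-(-t))^5 + 1/6*(1-(-t))^5 - 1/3*(1-(-t))^6 := by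
          linear_combination ((-2/15:ℝ) * t + (-2/225:ℝ) * t * s^2 + (-4/9:ℝ) * t^3) * hs
            + ((-1/15:ℝ) * t + (-1/75:ℝ) * t * r^2 + (-2/3:ℝ) * t^3) * hr
        rw [key]
        exact q1s s r (-t) hs hr hs0 hr0 (by linarith) (by linarith)
      · rcases le_or_gt t (r/5) with h4 | h4
        · rw [max_eq_right (by linarith : -s/5 - t ≤ (0:ℝ)), max_eq_right (by linarith : -t ≤ (0:ℝ)),
            max_eq_left (by linarith : (0:ℝ) ≤ s/5 - t),
            max_eq_right (by linarith : -r/5 - t ≤ (0:ℝ)), max_eq_left (by linarith : (0:ℝ) ≤ r/5 - t)]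
          have key : 1/9*(5*(0:ℝ)^5 + 8*(0:ℝ)^5 + 5*(s/5 - t)^5)
              + 1/6*((0:ℝ)^5 + 5*(0:ℝ)^5 + 5*(r/5 - t)^5 + (1 - t)^5) - 1/3*(1-t)^6
              = 5/9*(s/5-t)^5 + 5/6*(r/5-t)^5 + 1/6*(1-t)^5 - 1/3*(1-t)^6 := by ring
          rw [key]
          exact q1s s r t hs hr hs0 hr0 (by linarith) h4
        · rcases le_or_gt t (s/5) with h5 | h5
          · rw [max_eq_right (by linarith : -s/5 - t ≤ (0:ℝ)), max_eq_right (by linarith : -t ≤ (0:ℝ)),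
              max_eq_left (by linarith : (0:ℝ) ≤ s/5 - t),
              max_eq_right (by linarith : -r/5 - t ≤ (0:ℝ)), max_eq_right (by linarith : r/5 - t ≤ (0:ℝ))]
            have key : 1/9*(5*(0:ℝ)^5 + 8*(0:ℝ)^5 + 5*(s/5 - t)^5)
                + 1/6*((0:ℝ)^5 + 5*(0:ℝ)^5 + 5*(0:ℝ)^5 + (1 - t)^5) - 1/3*(1-t)^6
                = 5/9*(s/5-t)^5 + 1/6*(1-t)^5 - 1/3*(1-t)^6 := by ring
            rw [key]
            exact q2s s t hs hs0 (by linarith) h5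
          · rw [max_eq_right (by linarith : -s/5 - t ≤ (0:ℝ)), max_eq_right (by linarith : -t ≤ (0:ℝ)),
              max_eq_right (by linarith : s/5 - t ≤ (0:ℝ)),
              max_eq_right (by linarith : -r/5 - t ≤ (0:ℝ)), max_eq_right (by linarith : r/5 - t ≤ (0:ℝ))]
            have key : 1/9*(5*(0:ℝ)^5 + 8*(0:ℝ)^5 + 5*(0:ℝ)^5)
                + 1/6*((0:ℝ)^5 + 5*(0:ℝ)^5 + 5*(0:ℝ)^5 + (1 - t)^5) - 1/3*(1-t)^6
                = 1/6*(1-t)^5 - 1/3*(1-t)^6 := by ring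
            rw [key]
            exact endpiece (1-t) (by linarith) (by linarith)

lemma g_cont (f : ℝ → ℝ) (hf : ContDiffOn ℝ 6 f (Set.Icc (-1 : ℝ) 1)) :
    ContinuousOn (iteratedDerivWithin 6 f (Set.Icc (-1:ℝ) 1)) (Set.Icc (-1:ℝ) 1) :=
  hf.continuousOn_iteratedDerivWithin (m := 6) (by norm_num) (uniqueDiffOn_Icc (by norm_num))

lemma taylor_int (f : ℝ → ℝ) (hf : ContDiffOn ℝ 6 f (Set.Icc (-1 : ℝ) 1))
    {x : ℝ} (hx : x ∈ Set.Icc (-1:ℝ) 1) :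
    f x = taylorWithinEval f 5 (Set.Icc (-1:ℝ) 1) (-1) x
      + ∫ t in (-1:ℝ)..x, ((x - t)^5 / 120) * iteratedDerivWithin 6 f (Set.Icc (-1:ℝ) 1) t := by
  have hab : (-1:ℝ) < 1 := by norm_num
  set s : Set ℝ := Set.Icc (-1:ℝ) 1 with hs
  set g := iteratedDerivWithin 6 f s with hg
  have hgc : ContinuousOn g s := g_cont f hf
  have h5 : ContDiffOn ℝ 5 f s := hf.of_le (by norm_num)
  have hdiff : DifferentiableOn ℝ (iteratedDerivWithin 5 f s) s :=
    hf.differentiableOn_iteratedDerivWithin (by norm_num) (uniqueDiffOn_Icc hab)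
  rcases eq_or_lt_of_le hx.1 with h | h
  · simp [← h]
  · have key := intervalIntegral.integral_eq_sub_of_hasDeriv_right_of_le
        (f := fun t => taylorWithinEval f 5 s t x)
        (f' := fun t => (x - t)^5/120 * g t) h.le ?_ ?_ ?_
    · simp only [taylorWithinEval_self] at key
      rw [key]; ring
    · exact (continuousOn_taylorWithinEval (uniqueDiffOn_Icc hab) h5).mono
        (Set.Icc_subset_Icc le_rfl hx.2)
    · intro t ht
      have ht' : t ∈ Set.Ioo (-1:ℝ) 1 := ⟨ht.1, lt_of_lt_of_le ht.2 hx.2⟩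
      have hd := taylorWithinEval_hasDerivAt_Ioo x hab ht' h5 (hdiff.mono Set.Ioo_subset_Icc_self)
      have h2 := hd.hasDerivWithinAt (s := Set.Ioi t)
      convert h2 using 1
      have h120 : ((Nat.factorial 5 : ℕ) : ℝ) = 120 := by norm_num [Nat.factorial]
      have h6 : iteratedDerivWithin (5+1) f (Set.Icc (-1:ℝ) 1) = g := rfl
      rw [smul_eq_mul, h120, h6]
      ring
    · apply ContinuousOn.intervalIntegrable
      apply ContinuousOn.mul (by fun_prop)
      exact hgc.mono (by rw [Set.uIcc_of_le h.le]; exact Set.Icc_subset_Icc le_rfl hx.2)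

lemma exact_quad (c0 c1 c2 c3 c4 c5 : ℝ) (q : ℝ → ℝ)
    (hq : ∀ x, q x = c0 + c1*(x+1) + c2*(x+1)^2 + c3*(x+1)^3 + c4*(x+1)^4 + c5*(x+1)^5) :
    (∫ x in (-1:ℝ)..1, q x) = (1-(-1))/18 * (5 * q (-(Real.sqrt 15)/5) + 8 * q 0 + 5 * q (Real.sqrt 15/5))
    ∧ (∫ x in (-1:ℝ)..1, q x)
      = (1-(-1))/12 * (q (-1) + 5 * q (-(Real.sqrt 5)/5) + 5 * q (Real.sqrt 5/5) + q 1) := by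
  have hs : Real.sqrt 15 ^ 2 = 15 := Real.sq_sqrt (by norm_num)
  have hr : Real.sqrt 5 ^ 2 = 5 := Real.sq_sqrt (by norm_num)
  have hInt : (∫ x in (-1:ℝ)..1, q x) = 2*c0 + 2*c1 + 8/3*c2 + 4*c3 + 32/5*c4 + 32/3*c5 := by
    have key : ∀ x : ℝ, HasDerivAt (fun y:ℝ => c0*(y+1)^1 + c1*(y+1)^2/2 + c2*(y+1)^3/3
        + c3*(y+1)^4/4 + c4*(y+1)^5/5 + c5*(y+1)^6/6) (q x) x := by
      intro x
      have hp : ∀ n : ℕ, HasDerivAt (fun y:ℝ => (y+1)^n) (n*(x+1)^(n-1)) x := by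
        intro n; simpa using (((hasDerivAt_id x).add_const 1).fun_pow n)
      have := ((((((hp 1).const_mul c0).fun_add (((hp 2).const_mul c1).div_const 2)).fun_add
        (((hp 3).const_mul c2).div_const 3)).fun_add (((hp 4).const_mul c3).div_const 4)).fun_add
        (((hp 5).const_mul c4).div_const 5)).fun_add (((hp 6).const_mul c5).div_const 6)
      refine this.congr_deriv ?_
      rw [hq]; push_cast; ring
    rw [intervalIntegral.integral_eq_sub_of_hasDerivAt (fun x _ => key x)]
    · norm_num; ring
    · apply Continuous.intervalIntegrable
      have : q = fun x => c0 + c1*(x+1) + c2*(x+1)^2 + c3*(x+1)^3 + c4*(x+1)^4 + c5*(x+1)^5 :=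
        funext hq
      rw [this]; fun_prop
  constructor
  · rw [hInt]
    simp only [hq]
    linear_combination ((-2/45*c2 - 2/15*c3 - 22/75*c4 - 26/45*c5)
      + (Real.sqrt 15)^2 * (-2/1125*c4 - 2/225*c5)) * hs
  · rw [hInt]
    simp only [hq]
    linear_combination ((-1/15*c2 - 1/5*c3 - 31/75*c4 - 11/15*c5)
      + (Real.sqrt 5)^2 * (-1/375*c4 - 1/75*c5)) * hr

lemma fub (g : ℝ → ℝ) (hg : ContinuousOn g (Set.Icc (-1:ℝ) 1)) :
    ∫ x in (-1:ℝ)..1, (∫ t in (-1:ℝ)..1, (max (x-t) 0)^5/120 * g t)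
      = ∫ t in (-1:ℝ)..1, (1-t)^6/720 * g t := by
  have h12 : ((-1:ℝ)) ≤ 1 := by norm_num
  have hFc : ContinuousOn (fun p : ℝ × ℝ => (max (p.1 - p.2) 0)^5/120 * g p.2)
      (Set.Icc (-1:ℝ) 1 ×ˢ Set.Icc (-1:ℝ) 1) := by
    apply ContinuousOn.mul
    · fun_prop
    · exact hg.comp continuous_snd.continuousOn (fun p hp => hp.2)
  have hint : Integrable (Function.uncurry (fun x t => (max (x-t) 0)^5/120 * g t))
      ((volume.restrict (Set.Ioc (-1:ℝ) 1)).prod (volume.restrict (Set.Ioc (-1:ℝ) 1))) := by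
    rw [Measure.prod_restrict]
    exact ((hFc.integrableOn_compact (isCompact_Icc.prod isCompact_Icc)).mono_set
      (Set.prod_mono Set.Ioc_subset_Icc_self Set.Ioc_subset_Icc_self))
  have swap := MeasureTheory.integral_integral_swap hint
  rw [intervalIntegral.integral_of_le h12]
  simp_rw [intervalIntegral.integral_of_le h12]
  rw [swap]
  apply MeasureTheory.setIntegral_congr_fun measurableSet_Ioc
  intro t ht
  have ht1 : (-1:ℝ) ≤ t := le_of_lt ht.1
  have ht2 : t ≤ 1 := ht.2
  show (∫ x in Set.Ioc (-1:ℝ) 1, (max (x - t) 0)^5/120 * g t) = (1-t)^6/720 * g t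
  rw [← intervalIntegral.integral_of_le h12]
  have : (∫ x in (-1:ℝ)..1, (max (x-t) 0)^5/120 * g t)
      = (∫ x in (-1:ℝ)..1, (max (x-t) 0)^5/120) * g t := by
    rw [← intervalIntegral.integral_mul_const]
  rw [this]
  have key : (∫ x in (-1:ℝ)..1, (max (x-t) 0)^5/120) = (1-t)^6/720 := by
    have i1 : IntervalIntegrable (fun x => (max (x-t) 0)^5/120) volume (-1) t := by
      apply Continuous.intervalIntegrable; fun_prop
    have i2 : IntervalIntegrable (fun x => (max (x-t) 0)^5/120) volume t 1 := by
      apply Continuous.intervalIntegrable; fun_prop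
    rw [← intervalIntegral.integral_add_adjacent_intervals i1 i2]
    have e1 : (∫ x in (-1:ℝ)..t, (max (x-t) 0)^5/120) = 0 := by
      rw [intervalIntegral.integral_congr (g := fun _ => 0)]
      · simp
      · intro x hx
        rw [Set.uIcc_of_le ht1] at hx
        have : max (x-t) 0 = 0 := max_eq_right (by linarith [hx.2])
        simp [this]
    have e2 : (∫ x in t..(1:ℝ), (max (x-t) 0)^5/120) = (1-t)^6/720 := by
      rw [intervalIntegral.integral_congr (g := fun x => (x-t)^5/120)]
      · simp_rw [div_eq_mul_inv]
        rw [intervalIntegral.integral_mul_const]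
        have hc : (∫ x in t..(1:ℝ), (x-t)^5) = ∫ u in (t-t)..(1-t:ℝ), u^5 := by
          rw [← intervalIntegral.integral_comp_sub_right (fun u => u^5) t]
        rw [hc]
        rw [integral_pow]
        norm_num
        ring
      · intro x hx
        rw [Set.uIcc_of_le ht2] at hx
        have : max (x-t) 0 = x - t := max_eq_left (by linarith [hx.1])
        simp only [this]
    rw [e1, e2]; ring
  rw [key]

end Aux

set_option maxHeartbeats 2000000 in
theorem gauss_error_le_lobatto_error (f : ℝ → ℝ)
    (hf : ContDiffOn ℝ 6 f (Set.Icc (-1 : ℝ) 1))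
    (hpos : ∀ x ∈ Set.Icc (-1 : ℝ) 1, 0 ≤ iteratedDerivWithin 6 f (Set.Icc (-1 : ℝ) 1) x) :
    0 ≤ (∫ x in (-1 : ℝ)..1, f x) - gaussQ f (-1) 1 ∧
      (∫ x in (-1 : ℝ)..1, f x) - gaussQ f (-1) 1 ≤ lobattoQ f (-1) 1 - ∫ x in (-1 : ℝ)..1, f x := by
  have hab : ((-1:ℝ)) ≤ 1 := by norm_num
  have hs : Real.sqrt 15 ^ 2 = 15 := Real.sq_sqrt (by norm_num)
  have hr : Real.sqrt 5 ^ 2 = 5 := Real.sq_sqrt (by norm_num)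
  have hs0 : 0 ≤ Real.sqrt 15 := Real.sqrt_nonneg 15
  have hr0 : 0 ≤ Real.sqrt 5 := Real.sqrt_nonneg 5
  have hs4 : Real.sqrt 15 ≤ 4 := by nlinarith
  have hr3 : Real.sqrt 5 ≤ 3 := by nlinarith
  set g := iteratedDerivWithin 6 f (Set.Icc (-1:ℝ) 1) with hgdef
  have hgc : ContinuousOn g (Set.Icc (-1:ℝ) 1) := g_cont f hf
  set P : ℝ → ℝ := fun x => taylorWithinEval f 5 (Set.Icc (-1:ℝ) 1) (-1) x with hPdef
  set R : ℝ → ℝ := fun x => ∫ t in (-1:ℝ)..1, (max (x-t) 0)^5/120 * g t with hRdef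
  have hRa : ∀ a : ℝ, R a = ∫ t in (-1:ℝ)..1, (max (a-t) 0)^5/120 * g t := fun a => rfl
  -- splitting f = P + R on the interval
  have hsplit : ∀ x : ℝ, -1 ≤ x → x ≤ 1 → f x = P x + R x := by
    intro x hx1 hx2
    have hx : x ∈ Set.Icc (-1:ℝ) 1 := ⟨hx1, hx2⟩
    rw [taylor_int f hf hx]
    have i1 : IntervalIntegrable (fun t => (max (x-t) 0)^5/120 * g t) volume (-1) x := by
      apply ContinuousOn.intervalIntegrable
      apply ContinuousOn.mul (by fun_prop)
      exact hgc.mono (by rw [Set.uIcc_of_le hx1]; exact Set.Icc_subset_Icc le_rfl hx2)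
    have i2 : IntervalIntegrable (fun t => (max (x-t) 0)^5/120 * g t) volume x 1 := by
      apply ContinuousOn.intervalIntegrable
      apply ContinuousOn.mul (by fun_prop)
      exact hgc.mono (by rw [Set.uIcc_of_le hx2]; exact Set.Icc_subset_Icc hx1 le_rfl)
    have hR : R x = ∫ t in (-1:ℝ)..x, ((x - t)^5 / 120) * g t := by
      rw [hRa, ← intervalIntegral.integral_add_adjacent_intervals i1 i2]
      have e1 : (∫ t in (-1:ℝ)..x, (max (x-t) 0)^5/120 * g t)
          = ∫ t in (-1:ℝ)..x, ((x - t)^5 / 120) * g t := by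
        apply intervalIntegral.integral_congr
        intro t ht
        rw [Set.uIcc_of_le hx1] at ht
        have : max (x-t) 0 = x - t := max_eq_left (by linarith [ht.2])
        simp only [this]
      have e2 : (∫ t in x..(1:ℝ), (max (x-t) 0)^5/120 * g t) = 0 := by
        rw [intervalIntegral.integral_congr (g := fun _ => 0)]
        · simp
        · intro t ht
          rw [Set.uIcc_of_le hx2] at ht
          have : max (x-t) 0 = 0 := max_eq_right (by linarith [ht.1])
          simp [this]
      rw [e1, e2]; ring
    rw [hR]
  -- Taylor polynomial in explicit form
  have hP : ∀ x : ℝ, P x = (iteratedDerivWithin 0 f (Set.Icc (-1:ℝ) 1) (-1))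
      + (iteratedDerivWithin 1 f (Set.Icc (-1:ℝ) 1) (-1))*(x+1)
      + (iteratedDerivWithin 2 f (Set.Icc (-1:ℝ) 1) (-1)/2)*(x+1)^2
      + (iteratedDerivWithin 3 f (Set.Icc (-1:ℝ) 1) (-1)/6)*(x+1)^3
      + (iteratedDerivWithin 4 f (Set.Icc (-1:ℝ) 1) (-1)/24)*(x+1)^4
      + (iteratedDerivWithin 5 f (Set.Icc (-1:ℝ) 1) (-1)/120)*(x+1)^5 := by
    intro x
    show taylorWithinEval f 5 (Set.Icc (-1:ℝ) 1) (-1) x = _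
    rw [taylor_within_apply]
    simp [Finset.sum_range_succ, Nat.factorial, smul_eq_mul]
    ring
  have hPc : Continuous P := by
    rw [show P = fun x => (iteratedDerivWithin 0 f (Set.Icc (-1:ℝ) 1) (-1))
      + (iteratedDerivWithin 1 f (Set.Icc (-1:ℝ) 1) (-1))*(x+1)
      + (iteratedDerivWithin 2 f (Set.Icc (-1:ℝ) 1) (-1)/2)*(x+1)^2
      + (iteratedDerivWithin 3 f (Set.Icc (-1:ℝ) 1) (-1)/6)*(x+1)^3
      + (iteratedDerivWithin 4 f (Set.Icc (-1:ℝ) 1) (-1)/24)*(x+1)^4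
      + (iteratedDerivWithin 5 f (Set.Icc (-1:ℝ) 1) (-1)/120)*(x+1)^5 from funext hP]
    fun_prop
  obtain ⟨hGP, hLP⟩ := exact_quad _ _ _ _ _ _ P hP
  -- integrability
  have hfI : IntervalIntegrable f volume (-1) 1 := by
    apply ContinuousOn.intervalIntegrable
    rw [Set.uIcc_of_le hab]
    exact hf.continuousOn
  have hPI : IntervalIntegrable P volume (-1) 1 := hPc.intervalIntegrable _ _
  have iKer : ∀ c : ℝ, IntervalIntegrable (fun t => (max (c - t) 0)^5/120 * g t) volume (-1) 1 := by
    intro c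
    apply ContinuousOn.intervalIntegrable
    apply ContinuousOn.mul (by fun_prop)
    exact hgc.mono (by rw [Set.uIcc_of_le hab])
  have i0 : IntervalIntegrable (fun t => (1-t)^6/720 * g t) volume (-1) 1 := by
    apply ContinuousOn.intervalIntegrable
    apply ContinuousOn.mul (by fun_prop)
    exact hgc.mono (by rw [Set.uIcc_of_le hab])
  -- integral of R
  have hRint : (∫ x in (-1:ℝ)..1, R x) = (∫ x in (-1:ℝ)..1, f x) - ∫ x in (-1:ℝ)..1, P x := by
    rw [intervalIntegral.integral_congr (g := fun x => f x - P x) (by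
      intro x hx
      rw [Set.uIcc_of_le hab] at hx
      have := hsplit x hx.1 hx.2
      simp only []
      linarith)]
    exact intervalIntegral.integral_sub hfI hPI
  have hfub : (∫ x in (-1:ℝ)..1, R x) = ∫ t in (-1:ℝ)..1, (1-t)^6/720 * g t := fub g hgc
  -- node membership facts
  have hm1a : (-1:ℝ) ≤ -(Real.sqrt 15)/5 := by linarith
  have hm1b : -(Real.sqrt 15)/5 ≤ (1:ℝ) := by linarith
  have hm3a : (-1:ℝ) ≤ Real.sqrt 15/5 := by linarith
  have hm3b : Real.sqrt 15/5 ≤ (1:ℝ) := by linarith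
  have hl1a : (-1:ℝ) ≤ -(Real.sqrt 5)/5 := by linarith
  have hl1b : -(Real.sqrt 5)/5 ≤ (1:ℝ) := by linarith
  have hl3a : (-1:ℝ) ≤ Real.sqrt 5/5 := by linarith
  have hl3b : Real.sqrt 5/5 ≤ (1:ℝ) := by linarith
  -- quadratures on f in terms of P and R
  have hGf : gaussQ f (-1) 1 = 1/9*(5*(P (-(Real.sqrt 15)/5) + R (-(Real.sqrt 15)/5))
      + 8*(P 0 + R 0) + 5*(P (Real.sqrt 15/5) + R (Real.sqrt 15/5))) := by
    rw [gaussQ]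
    rw [show (5 + Real.sqrt 15) / 10 * (-1) + (5 - Real.sqrt 15) / 10 * 1 = -(Real.sqrt 15)/5 by ring]
    rw [show ((-1:ℝ) + 1) / 2 = 0 by norm_num]
    rw [show (5 - Real.sqrt 15) / 10 * (-1) + (5 + Real.sqrt 15) / 10 * 1 = Real.sqrt 15/5 by ring]
    rw [hsplit _ hm1a hm1b, hsplit 0 (by norm_num) (by norm_num), hsplit _ hm3a hm3b]
    ring
  have hLf : lobattoQ f (-1) 1 = 1/6*((P (-1) + R (-1)) + 5*(P (-(Real.sqrt 5)/5) + R (-(Real.sqrt 5)/5))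
      + 5*(P (Real.sqrt 5/5) + R (Real.sqrt 5/5)) + (P 1 + R 1)) := by
    rw [lobattoQ]
    rw [show (5 + Real.sqrt 5) / 10 * (-1) + (5 - Real.sqrt 5) / 10 * 1 = -(Real.sqrt 5)/5 by ring]
    rw [show (5 - Real.sqrt 5) / 10 * (-1) + (5 + Real.sqrt 5) / 10 * 1 = Real.sqrt 5/5 by ring]
    rw [hsplit _ hl1a hl1b, hsplit _ hl3a hl3b, hsplit (-1) (by norm_num) (by norm_num),
      hsplit 1 (by norm_num) (by norm_num)]
    ring
  -- combination for the Gauss kernel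
  have e1 : (1:ℝ)/9*(5*R (-(Real.sqrt 15)/5) + 8*R 0 + 5*R (Real.sqrt 15/5))
      = ∫ t in (-1:ℝ)..1, (5/9*((max (-(Real.sqrt 15)/5 - t) 0)^5/120 * g t)
        + (8/9*((max (0 - t) 0)^5/120 * g t)
        + 5/9*((max (Real.sqrt 15/5 - t) 0)^5/120 * g t))) := by
    rw [intervalIntegral.integral_add ((iKer _).const_mul _)
        (((iKer _).const_mul _).add ((iKer _).const_mul _)),
      intervalIntegral.integral_add ((iKer _).const_mul _) ((iKer _).const_mul _),
      intervalIntegral.integral_const_mul, intervalIntegral.integral_const_mul,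
      intervalIntegral.integral_const_mul]
    simp only [hRa]
    ring
  have iSum1 : IntervalIntegrable (fun t => 5/9*((max (-(Real.sqrt 15)/5 - t) 0)^5/120 * g t)
        + (8/9*((max (0 - t) 0)^5/120 * g t)
        + 5/9*((max (Real.sqrt 15/5 - t) 0)^5/120 * g t))) volume (-1) 1 :=
    ((iKer _).const_mul _).add (((iKer _).const_mul _).add ((iKer _).const_mul _))
  have hcomb1 : (∫ t in (-1:ℝ)..1, (1-t)^6/720 * g t)
      - 1/9*(5*R (-(Real.sqrt 15)/5) + 8*R 0 + 5*R (Real.sqrt 15/5))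
      = ∫ t in (-1:ℝ)..1, ((1-t)^6/6 - 1/9*(5*(max (-(Real.sqrt 15)/5 - t) 0)^5
          + 8*(max (-t) 0)^5 + 5*(max (Real.sqrt 15/5 - t) 0)^5))/120 * g t := by
    rw [e1, ← intervalIntegral.integral_sub i0 iSum1]
    apply intervalIntegral.integral_congr
    intro t _
    simp only [zero_sub]
    ring
  -- combination for the second kernel
  have e2 : (1:ℝ)/9*(5*R (-(Real.sqrt 15)/5) + 8*R 0 + 5*R (Real.sqrt 15/5))
      + 1/6*(R (-1) + 5*R (-(Real.sqrt 5)/5) + 5*R (Real.sqrt 5/5) + R 1)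
      = ∫ t in (-1:ℝ)..1, (5/9*((max (-(Real.sqrt 15)/5 - t) 0)^5/120 * g t)
        + (8/9*((max (0 - t) 0)^5/120 * g t)
        + (5/9*((max (Real.sqrt 15/5 - t) 0)^5/120 * g t)
        + (1/6*((max (-1 - t) 0)^5/120 * g t)
        + (5/6*((max (-(Real.sqrt 5)/5 - t) 0)^5/120 * g t)
        + (5/6*((max (Real.sqrt 5/5 - t) 0)^5/120 * g t)
        + 1/6*((max (1 - t) 0)^5/120 * g t))))))) := by
    rw [intervalIntegral.integral_add ((iKer _).const_mul _)
        (((iKer _).const_mul _).add (((iKer _).const_mul _).add (((iKer _).const_mul _).add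
          (((iKer _).const_mul _).add (((iKer _).const_mul _).add ((iKer _).const_mul _)))))),
      intervalIntegral.integral_add ((iKer _).const_mul _)
        (((iKer _).const_mul _).add (((iKer _).const_mul _).add
          (((iKer _).const_mul _).add (((iKer _).const_mul _).add ((iKer _).const_mul _))))),
      intervalIntegral.integral_add ((iKer _).const_mul _)
        (((iKer _).const_mul _).add (((iKer _).const_mul _).add
          (((iKer _).const_mul _).add ((iKer _).const_mul _)))),
      intervalIntegral.integral_add ((iKer _).const_mul _)
        (((iKer _).const_mul _).add (((iKer _).const_mul _).add ((iKer _).const_mul _))),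
      intervalIntegral.integral_add ((iKer _).const_mul _)
        (((iKer _).const_mul _).add ((iKer _).const_mul _)),
      intervalIntegral.integral_add ((iKer _).const_mul _) ((iKer _).const_mul _),
      intervalIntegral.integral_const_mul, intervalIntegral.integral_const_mul,
      intervalIntegral.integral_const_mul, intervalIntegral.integral_const_mul,
      intervalIntegral.integral_const_mul, intervalIntegral.integral_const_mul,
      intervalIntegral.integral_const_mul]
    simp only [hRa]
    ring
  have iSum2 : IntervalIntegrable (fun t => 5/9*((max (-(Real.sqrt 15)/5 - t) 0)^5/120 * g t)
        + (8/9*((max (0 - t) 0)^5/120 * g t)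
        + (5/9*((max (Real.sqrt 15/5 - t) 0)^5/120 * g t)
        + (1/6*((max (-1 - t) 0)^5/120 * g t)
        + (5/6*((max (-(Real.sqrt 5)/5 - t) 0)^5/120 * g t)
        + (5/6*((max (Real.sqrt 5/5 - t) 0)^5/120 * g t)
        + 1/6*((max (1 - t) 0)^5/120 * g t))))))) volume (-1) 1 :=
    ((iKer _).const_mul _).add (((iKer _).const_mul _).add (((iKer _).const_mul _).add
      (((iKer _).const_mul _).add (((iKer _).const_mul _).add (((iKer _).const_mul _).add
        ((iKer _).const_mul _))))))
  have hcomb2 : ((1:ℝ)/9*(5*R (-(Real.sqrt 15)/5) + 8*R 0 + 5*R (Real.sqrt 15/5))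
      + 1/6*(R (-1) + 5*R (-(Real.sqrt 5)/5) + 5*R (Real.sqrt 5/5) + R 1))
      - 2*(∫ t in (-1:ℝ)..1, (1-t)^6/720 * g t)
      = ∫ t in (-1:ℝ)..1, (1/9*(5*(max (-(Real.sqrt 15)/5 - t) 0)^5 + 8*(max (-t) 0)^5
          + 5*(max (Real.sqrt 15/5 - t) 0)^5)
        + 1/6*((max (-1 - t) 0)^5 + 5*(max (-(Real.sqrt 5)/5 - t) 0)^5
          + 5*(max (Real.sqrt 5/5 - t) 0)^5 + (max (1 - t) 0)^5)
        - 1/3*(1-t)^6)/120 * g t := by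
    rw [e2, ← intervalIntegral.integral_const_mul, ← intervalIntegral.integral_sub iSum2 (i0.const_mul 2)]
    apply intervalIntegral.integral_congr
    intro t _
    simp only [zero_sub]
    ring
  -- positivity of the two kernel integrals
  have hE1 : 0 ≤ ∫ t in (-1:ℝ)..1, ((1-t)^6/6 - 1/9*(5*(max (-(Real.sqrt 15)/5 - t) 0)^5
      + 8*(max (-t) 0)^5 + 5*(max (Real.sqrt 15/5 - t) 0)^5))/120 * g t := by
    apply intervalIntegral.integral_nonneg hab
    intro u hu
    exact mul_nonneg (div_nonneg (K1_nonneg u hu.1 hu.2) (by norm_num)) (hpos u hu)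
  have hE2 : 0 ≤ ∫ t in (-1:ℝ)..1, (1/9*(5*(max (-(Real.sqrt 15)/5 - t) 0)^5 + 8*(max (-t) 0)^5
      + 5*(max (Real.sqrt 15/5 - t) 0)^5)
    + 1/6*((max (-1 - t) 0)^5 + 5*(max (-(Real.sqrt 5)/5 - t) 0)^5
      + 5*(max (Real.sqrt 5/5 - t) 0)^5 + (max (1 - t) 0)^5)
    - 1/3*(1-t)^6)/120 * g t := by
    apply intervalIntegral.integral_nonneg hab
    intro u hu
    exact mul_nonneg (div_nonneg (K2_nonneg u hu.1 hu.2) (by norm_num)) (hpos u hu)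
  constructor
  · rw [hGf]
    linarith [hcomb1, hGP, hRint, hfub, hE1]
  · rw [hGf, hLf]
    linarith [hcomb1, hcomb2, hGP, hLP, hRint, hfub, hE1, hE2]
end

section
/- For f : [a,b] → ℝ of class C^6, the composite three-point Gauss quadrature satisfies |∫_a^b f(x) dx − G_n[f;a,b]| ≤ (b−a)^7/(2016000 n^6) · sup_{x∈[a,b]} |f⁽⁶⁾(x)|. -/
open MeasureTheory intervalIntegral

noncomputable def gaussC (n : ℕ) (f : ℝ → ℝ) (a b : ℝ) : ℝ :=
  ∑ k ∈ Finset.range n, gaussQ f (a + k * (b - a) / n) (a + (k + 1) * (b - a) / n)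

noncomputable def lobattoC (n : ℕ) (f : ℝ → ℝ) (a b : ℝ) : ℝ :=
  ∑ k ∈ Finset.range n, lobattoQ f (a + k * (b - a) / n) (a + (k + 1) * (b - a) / n)

noncomputable def quadC (n : ℕ) (f : ℝ → ℝ) (a b : ℝ) : ℝ :=
  ∑ k ∈ Finset.range n, quadQ f (a + k * (b - a) / n) (a + (k + 1) * (b - a) / n)

namespace GaussAux

open Set

lemma amgm6 (U V : ℝ) (hU : 0 ≤ U) (hV : 0 ≤ V) : U^5 * V ≤ ((5*U+V)/6)^6 := by
  nlinarith [sq_nonneg (U-V), sq_nonneg (U+V), mul_nonneg hU hV, sq_nonneg ((U-V)*(U+V)),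
    mul_nonneg (mul_nonneg hU hU) hV, mul_nonneg (mul_nonneg hU hU) hU,
    mul_nonneg (mul_nonneg (mul_nonneg hU hU) hU) hV, sq_nonneg (U*(U-V)), sq_nonneg (U^2-V^2),
    mul_nonneg (mul_nonneg (mul_nonneg hU hU) hU) hU, sq_nonneg (U^2*(U-V)), sq_nonneg (U^2+V^2)]

lemma master (s h u : ℝ) (hs2 : s^2 = 15) (hs0 : 0 ≤ s) (hh : 0 < h)
    (hu0 : 0 ≤ u) (hu1 : u ≤ s*h/10) : 5*h*u^5 ≤ 3*((5-s)/10*h + u)^6 := by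
  have hsp : (3.8:ℝ) < s := by nlinarith
  have hs4 : s < 4 := by nlinarith
  have hs' : 0 < s := by linarith
  set U : ℝ := 5*u/s with hUdef
  have hUs : U * s = 5*u := by rw [hUdef, div_mul_cancel₀ _ hs'.ne']
  have hU : 0 ≤ U := by positivity
  have hV : (0:ℝ) ≤ h/2 := by linarith
  have ham := amgm6 U (h/2) hU hV
  have h1 : (5*U + h/2)/6 ≤ (5-s)/10*h + u := by
    have key : 0 ≤ (s*h/10 - u) * (25 - 6*s) :=
      mul_nonneg (by linarith) (by linarith)
    have C : (25*u + s*h/2) ≤ (3*s*h - (3/5)*(s^2)*h + 6*s*u) := by nlinarith [key, hs2]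
    have hC2 : ((5*U + h/2)/6) * s ≤ ((5-s)/10*h + u) * s := by
      have e1 : ((5*U + h/2)/6) * s = (5*(U*s) + s*h/2)/6 := by ring
      rw [e1, hUs]
      rw [div_le_iff₀ (by norm_num : (0:ℝ) < 6)]
      nlinarith [C]
    exact le_of_mul_le_mul_right hC2 hs'
  have h2 : U^5 * (h/2) ≤ ((5-s)/10*h + u)^6 :=
    le_trans ham (pow_le_pow_left₀ (by positivity) h1 6)
  have h3 : 5*h*u^5 ≤ 3 * (U^5 * (h/2)) := by
    have hU5 : U^5 * s^5 = 3125 * u^5 := by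
      have : U^5 * s^5 = (U*s)^5 := by ring
      rw [this, hUs]; ring
    have hs5 : s^5 = 225 * s := by rw [show s^5 = s^2*s^2*s by ring, hs2]; ring
    have hs5' : s^5 ≤ 900 := by rw [hs5]; nlinarith
    have hs5p : 0 < s^5 := by positivity
    have : 5*h*u^5 * s^5 ≤ (3 * (U^5 * (h/2))) * s^5 := by
      have e : (3 * (U^5 * (h/2))) * s^5 = (3/2) * h * (U^5 * s^5) := by ring
      rw [e, hU5]
      have hu5 : 0 ≤ h * u^5 := mul_nonneg hh.le (pow_nonneg hu0 5)
      nlinarith [mul_le_mul_of_nonneg_left hs5' hu5]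
    exact le_of_mul_le_mul_right this hs5p
  linarith [mul_le_mul_of_nonneg_left h2 (by norm_num : (0:ℝ) ≤ 3)]

lemma taylor_int {f : ℝ → ℝ} {a b : ℝ} (hab : a < b) (hf : ContDiffOn ℝ 6 f (Set.Icc a b))
    {c x : ℝ} (hc : c ∈ Set.Icc a b) (hx : x ∈ Set.Icc a b) (hcx : c ≤ x) :
    f x = taylorWithinEval f 5 (Set.Icc a b) c x
      + ∫ t in c..x, ((x - t)^5 / 120) * iteratedDerivWithin 6 f (Set.Icc a b) t := by
  have hs := uniqueDiffOn_Icc hab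
  have hf5 : ContDiffOn ℝ 5 f (Icc a b) := hf.of_le (by norm_num)
  have hdiff : DifferentiableOn ℝ (iteratedDerivWithin 5 f (Icc a b)) (Icc a b) :=
    hf.differentiableOn_iteratedDerivWithin (by norm_num) hs
  have hg : ContinuousOn (iteratedDerivWithin 6 f (Icc a b)) (Icc a b) :=
    hf.continuousOn_iteratedDerivWithin le_rfl hs
  set g := iteratedDerivWithin 6 f (Icc a b) with hgdef
  have hFd : ∀ y ∈ Icc a b, HasDerivWithinAt (fun y => taylorWithinEval f 5 (Icc a b) y x)
      ((((Nat.factorial 5 : ℕ) : ℝ)⁻¹ * (x - y)^5) • g y) (Icc a b) y := fun y hy =>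
    hasDerivWithinAt_taylorWithinEval_at_Icc x hab hy hf5 hdiff
  have hsub : Icc c x ⊆ Icc a b := Icc_subset_Icc hc.1 hx.2
  have hcont : ContinuousOn (fun y => taylorWithinEval f 5 (Icc a b) y x) (Icc c x) :=
    fun y hy => ((hFd y (hsub hy)).continuousWithinAt).mono hsub
  have hint : IntervalIntegrable (fun y => (((Nat.factorial 5 : ℕ) : ℝ)⁻¹ * (x - y)^5) • g y)
      volume c x := by
    apply ContinuousOn.intervalIntegrable
    rw [uIcc_of_le hcx]
    exact (continuousOn_const.mul ((continuousOn_const.sub continuousOn_id).pow 5)).smul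
      (hg.mono hsub)
  have ftc := intervalIntegral.integral_eq_sub_of_hasDeriv_right_of_le hcx hcont
    (fun y hy => by
      have hyab : y ∈ Ioo a b := ⟨lt_of_le_of_lt hc.1 hy.1, lt_of_lt_of_le hy.2 hx.2⟩
      exact (((hFd y (Ioo_subset_Icc_self hyab)).hasDerivAt
        (Icc_mem_nhds hyab.1 hyab.2)).hasDerivWithinAt)) hint
  rw [taylorWithinEval_self] at ftc
  have : ∫ t in c..x, ((x - t)^5 / 120) * g t
      = ∫ y in c..x, (((Nat.factorial 5 : ℕ) : ℝ)⁻¹ * (x - y)^5) • g y := by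
    apply intervalIntegral.integral_congr
    intro t _
    show (x - t)^5 / 120 * g t = (((Nat.factorial 5 : ℕ) : ℝ)⁻¹ * (x - t)^5) • g t
    rw [smul_eq_mul, show ((Nat.factorial 5 : ℕ) : ℝ) = 120 by norm_num [Nat.factorial]]
    ring
  rw [this, ftc]
  ring

lemma gauss_exact (c d : ℝ) (C0 C1 C2 C3 C4 C5 : ℝ) :
    (∫ x in c..d, (C0 + C1*(x-c) + C2*(x-c)^2 + C3*(x-c)^3 + C4*(x-c)^4 + C5*(x-c)^5))
      = gaussQ (fun x => C0 + C1*(x-c) + C2*(x-c)^2 + C3*(x-c)^3 + C4*(x-c)^4 + C5*(x-c)^5) c d := by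
  have hs2 : Real.sqrt 15 ^ 2 = 15 := Real.sq_sqrt (by norm_num)
  set s := Real.sqrt 15 with hsdef
  have hA : ∀ x : ℝ, HasDerivAt (fun y => C0*(y-c) + C1*(y-c)^2/2 + C2*(y-c)^3/3
      + C3*(y-c)^4/4 + C4*(y-c)^5/5 + C5*(y-c)^6/6)
      (C0 + C1*(x-c) + C2*(x-c)^2 + C3*(x-c)^3 + C4*(x-c)^4 + C5*(x-c)^5) x := by
    intro x
    have h0 : HasDerivAt (fun y : ℝ => y - c) 1 x := (hasDerivAt_id x).sub_const c
    have hk : ∀ k : ℕ, HasDerivAt (fun y : ℝ => (y - c)^(k+1)) ((k+1) * (x - c)^k) x := by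
      intro k
      simpa using h0.fun_pow (k+1)
    have := ((((((hk 0).const_mul C0).add (((hk 1).const_mul C1).div_const 2)).add
      (((hk 2).const_mul C2).div_const 3)).add (((hk 3).const_mul C3).div_const 4)).add
      (((hk 4).const_mul C4).div_const 5)).add (((hk 5).const_mul C5).div_const 6)
    convert this using 1
    · rfl
    · rfl
    · funext y
      simp only [Pi.add_apply]
      push_cast
      ring
    · push_cast
      ring
  have hcont : IntervalIntegrable (fun x => C0 + C1*(x-c) + C2*(x-c)^2 + C3*(x-c)^3
      + C4*(x-c)^4 + C5*(x-c)^5) volume c d := Continuous.intervalIntegrable (by continuity) c d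
  rw [intervalIntegral.integral_eq_sub_of_hasDerivAt (fun x _ => hA x) hcont]
  show _ = (d - c) / 18 * _
  have e1 : (5 + s) / 10 * c + (5 - s) / 10 * d - c = (5-s)/10*(d-c) := by ring
  have e2 : (c + d)/2 - c = (d-c)/2 := by ring
  have e3 : (5 - s) / 10 * c + (5 + s) / 10 * d - c = (5+s)/10*(d-c) := by ring
  simp only []
  rw [e1, e2, e3]
  linear_combination (- C2*(d-c)^3/180 - C3*(d-c)^4/120 - C4*(d-c)^5*(10*s^2+1650)/180000
    - C5*(d-c)^6*(250*s^2+16250)/1800000) * hs2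

lemma kern_int (xq c d : ℝ) (hc : c ≤ xq) (hd : xq ≤ d) :
    ∫ t in c..d, (max (xq - t) 0)^5/120 = (xq - c)^6/720 := by
  have h1 : IntervalIntegrable (fun t => (max (xq - t) 0)^5/120) volume c xq :=
    Continuous.intervalIntegrable (by fun_prop) _ _
  have h2 : IntervalIntegrable (fun t => (max (xq - t) 0)^5/120) volume xq d :=
    Continuous.intervalIntegrable (by fun_prop) _ _
  rw [← intervalIntegral.integral_add_adjacent_intervals h1 h2]
  have e1 : (∫ t in c..xq, (max (xq - t) 0)^5/120) = ∫ t in c..xq, (xq - t)^5/120 := by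
    apply intervalIntegral.integral_congr
    intro t ht
    rw [uIcc_of_le hc] at ht
    show (max (xq - t) 0)^5/120 = (xq - t)^5/120
    rw [max_eq_left (by simp only [sub_nonneg]; exact ht.2)]
  have e2 : (∫ t in xq..d, (max (xq - t) 0)^5/120) = 0 := by
    have : (∫ t in xq..d, (max (xq - t) 0)^5/120) = ∫ t in xq..d, (0:ℝ) := by
      apply intervalIntegral.integral_congr
      intro t ht
      rw [uIcc_of_le hd] at ht
      show (max (xq - t) 0)^5/120 = 0
      rw [max_eq_right (by simp only [sub_nonpos]; exact ht.1)]
      norm_num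
    rw [this, intervalIntegral.integral_zero]
  rw [e1, e2, add_zero]
  have hA : ∀ t : ℝ, HasDerivAt (fun y => -(xq - y)^6/720) ((xq - t)^5/120) t := by
    intro t
    have h0 : HasDerivAt (fun y : ℝ => xq - y) (-1) t := by
      simpa using ((hasDerivAt_id t).const_sub xq)
    have := (h0.fun_pow 6).const_mul (-(1:ℝ)/720)
    convert this using 1
    · rfl
    · rfl
    · funext y; ring
    · push_cast; ring
  rw [intervalIntegral.integral_eq_sub_of_hasDerivAt (fun t _ => hA t)
    (Continuous.intervalIntegrable (by fun_prop) _ _)]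
  ring

lemma swap_lemma {c d : ℝ} (hcd : c < d) {g : ℝ → ℝ} (hg : ContinuousOn g (Set.Icc c d)) :
    (∫ x in c..d, (∫ t in c..d, (max (x - t) 0)^5/120 * g t))
      = ∫ t in c..d, (d - t)^6/720 * g t := by
  set F : ℝ → ℝ → ℝ := fun x t => (max (x - t) 0)^5/120 * g t with hF
  have kern_cont : Continuous (fun p : ℝ × ℝ => (max (p.1 - p.2) 0)^5/120) := by fun_prop
  have hFc : ContinuousOn (Function.uncurry F) (Icc c d ×ˢ Icc c d) := by
    apply ContinuousOn.mul
    · exact (kern_cont.comp (continuous_fst.prodMk continuous_snd)).continuousOn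
    · exact hg.comp continuous_snd.continuousOn (fun p hp => hp.2)
  have hInt : Integrable (Function.uncurry F)
      ((volume.restrict (Ioc c d)).prod (volume.restrict (Ioc c d))) := by
    rw [Measure.prod_restrict, ← MeasureTheory.Measure.volume_eq_prod]
    exact (hFc.integrableOn_compact (isCompact_Icc.prod isCompact_Icc)).mono_set
      (prod_mono Ioc_subset_Icc_self Ioc_subset_Icc_self)
  have swap := MeasureTheory.integral_integral_swap hInt
  rw [intervalIntegral.integral_of_le hcd.le]
  have congr1 : ∀ x, (∫ t in c..d, F x t) = ∫ t in Ioc c d, F x t :=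
    fun x => intervalIntegral.integral_of_le hcd.le
  have congr1' : ∀ x, (∫ t in c..d, (max (x - t) 0)^5/120 * g t) = ∫ t in Ioc c d, F x t :=
    congr1
  simp_rw [congr1']
  rw [swap]
  rw [intervalIntegral.integral_of_le hcd.le]
  apply setIntegral_congr_fun measurableSet_Ioc
  intro t ht
  have ht' : t ∈ Icc c d := Ioc_subset_Icc_self ht
  show (∫ x in Ioc c d, F x t) = (d - t)^6/720 * g t
  have : (∫ x in Ioc c d, F x t) = (∫ x in c..d, (max (x - t) 0)^5/120) * g t := by
    rw [← intervalIntegral.integral_of_le hcd.le, ← intervalIntegral.integral_mul_const]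
  rw [this]
  congr 1
  have h1 : IntervalIntegrable (fun x => (max (x - t) 0)^5/120) volume c t :=
    Continuous.intervalIntegrable (by fun_prop) _ _
  have h2 : IntervalIntegrable (fun x => (max (x - t) 0)^5/120) volume t d :=
    Continuous.intervalIntegrable (by fun_prop) _ _
  rw [← intervalIntegral.integral_add_adjacent_intervals h1 h2]
  have e1 : (∫ x in c..t, (max (x - t) 0)^5/120) = 0 := by
    have : (∫ x in c..t, (max (x - t) 0)^5/120) = ∫ x in c..t, (0:ℝ) := by
      apply intervalIntegral.integral_congr
      intro x hx
      rw [uIcc_of_le ht'.1] at hx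
      show (max (x - t) 0)^5/120 = 0
      rw [max_eq_right (by simp only [sub_nonpos]; exact hx.2)]
      norm_num
    rw [this, intervalIntegral.integral_zero]
  have e2 : (∫ x in t..d, (max (x - t) 0)^5/120) = (d-t)^6/720 := by
    have e2' : (∫ x in t..d, (max (x - t) 0)^5/120) = ∫ x in t..d, (x - t)^5/120 := by
      apply intervalIntegral.integral_congr
      intro x hx
      rw [uIcc_of_le ht'.2] at hx
      show (max (x - t) 0)^5/120 = (x - t)^5/120
      rw [max_eq_left (by simp only [sub_nonneg]; exact hx.1)]
    rw [e2']
    have hA : ∀ x : ℝ, HasDerivAt (fun y => (y - t)^6/720) ((x - t)^5/120) x := by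
      intro x
      have h0 : HasDerivAt (fun y : ℝ => y - t) 1 x := (hasDerivAt_id x).sub_const t
      have := (h0.fun_pow 6).div_const 720
      convert this using 1
      · rfl
      · rfl
      push_cast; ring
    rw [intervalIntegral.integral_eq_sub_of_hasDerivAt (fun x _ => hA x)
      (Continuous.intervalIntegrable (by fun_prop) _ _)]
    ring
  rw [e1, e2, zero_add]

end GaussAux
namespace GaussAux
open Set

set_option maxHeartbeats 2000000 in
lemma single_interval {a b : ℝ} (hab : a < b) {f : ℝ → ℝ}
    (hf : ContDiffOn ℝ 6 f (Set.Icc a b)) {c d : ℝ} (hcd : c < d)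
    (hac : a ≤ c) (hdb : d ≤ b) {M : ℝ}
    (hM : ∀ t ∈ Set.Icc a b, |iteratedDerivWithin 6 f (Set.Icc a b) t| ≤ M) :
    |(∫ x in c..d, f x) - gaussQ f c d| ≤ (d - c)^7 / 2016000 * M := by
  have hs2 : Real.sqrt 15 ^ 2 = 15 := Real.sq_sqrt (by norm_num)
  set s := Real.sqrt 15 with hsdef
  have hs0 : 0 ≤ s := Real.sqrt_nonneg 15
  have hs3 : 3.8 < s := by nlinarith
  have hs4 : s < 4 := by nlinarith
  have hsubab : Icc c d ⊆ Icc a b := Icc_subset_Icc hac hdb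
  have hdc : 0 < d - c := by linarith
  set g := iteratedDerivWithin 6 f (Icc a b) with hgdef
  have hg : ContinuousOn g (Icc a b) :=
    hf.continuousOn_iteratedDerivWithin le_rfl (uniqueDiffOn_Icc hab)
  have hg' : ContinuousOn g (Icc c d) := hg.mono hsubab
  -- nodes
  set x1 : ℝ := (5 + s) / 10 * c + (5 - s) / 10 * d with hx1def
  set x2 : ℝ := (c + d) / 2 with hx2def
  set x3 : ℝ := (5 - s) / 10 * c + (5 + s) / 10 * d with hx3def
  have hx1 : x1 = c + (5 - s)/10*(d - c) := by rw [hx1def]; ring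
  have hx3 : x3 = c + (5 + s)/10*(d - c) := by rw [hx3def]; ring
  have hcx1 : c < x1 := by rw [hx1]; nlinarith
  have hx1x2 : x1 < x2 := by rw [hx1, hx2def]; nlinarith
  have hx2x3 : x2 < x3 := by rw [hx3, hx2def]; nlinarith
  have hx3d : x3 < d := by rw [hx3]; nlinarith
  have hx1m : x1 ∈ Icc c d := ⟨hcx1.le, by linarith⟩
  have hx2m : x2 ∈ Icc c d := ⟨by linarith, by linarith⟩
  have hx3m : x3 ∈ Icc c d := ⟨by linarith, hx3d.le⟩
  have hx21 : x2 - x1 = s*(d-c)/10 := by rw [hx1, hx2def]; ring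
  have hx32 : x3 - x2 = s*(d-c)/10 := by rw [hx3, hx2def]; ring
  -- remainder function
  set R : ℝ → ℝ := fun x => ∫ t in c..d, (max (x - t) 0)^5/120 * g t with hRdef
  -- Taylor coefficients
  set C : ℕ → ℝ := fun k => ((k.factorial : ℕ) : ℝ)⁻¹ * iteratedDerivWithin k f (Icc a b) c
    with hCdef
  set P : ℝ → ℝ := fun x => C 0 + C 1*(x-c) + C 2*(x-c)^2 + C 3*(x-c)^3 + C 4*(x-c)^4
    + C 5*(x-c)^5 with hPdef
  have hcm : c ∈ Icc a b := ⟨hac, by linarith⟩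
  -- f = P + R on Icc c d
  have hfP : ∀ x ∈ Icc c d, f x = P x + R x := by
    intro x hx
    have hxab : x ∈ Icc a b := hsubab hx
    have ht := taylor_int hab hf hcm hxab hx.1
    have hTP : taylorWithinEval f 5 (Icc a b) c x = P x := by
      rw [taylor_within_apply]
      rw [hPdef]
      simp only [Finset.sum_range_succ, Finset.sum_range_zero, smul_eq_mul, hCdef]
      norm_num [Nat.factorial]
      ring
    have hint1 : IntervalIntegrable (fun t => (max (x - t) 0)^5/120 * g t) volume c x :=
      ContinuousOn.intervalIntegrable (by
        apply ContinuousOn.mul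
        · exact (Continuous.continuousOn (by fun_prop))
        · exact hg.mono (by rw [uIcc_of_le hx.1]; exact Icc_subset_Icc hac (le_trans hx.2 hdb)))
    have hint2 : IntervalIntegrable (fun t => (max (x - t) 0)^5/120 * g t) volume x d :=
      ContinuousOn.intervalIntegrable (by
        apply ContinuousOn.mul
        · exact (Continuous.continuousOn (by fun_prop))
        · exact hg.mono (by rw [uIcc_of_le hx.2]; exact Icc_subset_Icc (le_trans hac hx.1) hdb))
    have hsplit : R x = (∫ t in c..x, (max (x - t) 0)^5/120 * g t)
        + ∫ t in x..d, (max (x - t) 0)^5/120 * g t :=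
      (intervalIntegral.integral_add_adjacent_intervals hint1 hint2).symm
    have he1 : (∫ t in c..x, (max (x - t) 0)^5/120 * g t)
        = ∫ t in c..x, ((x - t)^5/120) * g t := by
      apply intervalIntegral.integral_congr
      intro t ht
      rw [uIcc_of_le hx.1] at ht
      show (max (x - t) 0)^5/120 * g t = (x - t)^5/120 * g t
      rw [max_eq_left (by simp only [sub_nonneg]; exact ht.2)]
    have he2 : (∫ t in x..d, (max (x - t) 0)^5/120 * g t) = 0 := by
      have : (∫ t in x..d, (max (x - t) 0)^5/120 * g t) = ∫ t in x..d, (0:ℝ) := by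
        apply intervalIntegral.integral_congr
        intro t ht
        rw [uIcc_of_le hx.2] at ht
        show (max (x - t) 0)^5/120 * g t = 0
        rw [max_eq_right (by simp only [sub_nonpos]; exact ht.1)]
        norm_num
      rw [this, intervalIntegral.integral_zero]
    rw [ht, hTP, hsplit, he1, he2, add_zero]
  -- integrability facts
  have hfint : IntervalIntegrable f volume c d :=
    ContinuousOn.intervalIntegrable ((hf.continuousOn).mono (by rwa [uIcc_of_le hcd.le]))
  have hPint : IntervalIntegrable P volume c d := Continuous.intervalIntegrable (by fun_prop) c d
  have hKi : ∀ xq : ℝ, IntervalIntegrable (fun t => (max (xq - t) 0)^5/120 * g t) volume c d := by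
    intro xq
    apply ContinuousOn.intervalIntegrable
    apply ContinuousOn.mul
    · exact Continuous.continuousOn (by fun_prop)
    · rwa [uIcc_of_le hcd.le]
  have hAi : IntervalIntegrable (fun t => (d - t)^6/720 * g t) volume c d := by
    apply ContinuousOn.intervalIntegrable
    apply ContinuousOn.mul
    · exact Continuous.continuousOn (by fun_prop)
    · rwa [uIcc_of_le hcd.le]
  -- integral of R
  have hIR : ∫ x in c..d, R x = (∫ x in c..d, f x) - ∫ x in c..d, P x := by
    rw [← intervalIntegral.integral_sub hfint hPint]
    apply intervalIntegral.integral_congr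
    intro x hx
    rw [uIcc_of_le hcd.le] at hx
    have := hfP x hx
    show R x = f x - P x
    linarith
  -- swap
  have hswap : ∫ x in c..d, R x = ∫ t in c..d, (d - t)^6/720 * g t := swap_lemma hcd hg'
  -- gaussQ decomposition
  have hQ : gaussQ f c d = gaussQ P c d
      + (d - c)/18 * (5 * R x1 + 8 * R x2 + 5 * R x3) := by
    rw [gaussQ, gaussQ, ← hsdef, ← hx1def, ← hx2def, ← hx3def,
      hfP x1 hx1m, hfP x2 hx2m, hfP x3 hx3m]
    ring
  -- exactness
  have hEx : ∫ x in c..d, P x = gaussQ P c d := by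
    rw [hPdef]
    exact gauss_exact c d (C 0) (C 1) (C 2) (C 3) (C 4) (C 5)
  -- kernel
  set K : ℝ → ℝ := fun t => (d - t)^6/720
    - ((5*(d-c)/18) * ((max (x1 - t) 0)^5/120)
      + ((8*(d-c)/18) * ((max (x2 - t) 0)^5/120) + (5*(d-c)/18) * ((max (x3 - t) 0)^5/120)))
    with hKdef
  -- error as kernel integral
  have hE : (∫ x in c..d, f x) - gaussQ f c d = ∫ t in c..d, K t * g t := by
    have e : ∫ t in c..d, K t * g t
        = ∫ t in c..d, ((d - t)^6/720 * g t
          - ((5*(d-c)/18) * ((max (x1 - t) 0)^5/120 * g t)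
            + ((8*(d-c)/18) * ((max (x2 - t) 0)^5/120 * g t)
              + (5*(d-c)/18) * ((max (x3 - t) 0)^5/120 * g t)))) := by
      apply intervalIntegral.integral_congr
      intro t _
      show K t * g t = _
      rw [hKdef]
      ring
    rw [e, intervalIntegral.integral_sub hAi
        (((hKi x1).const_mul _).add (((hKi x2).const_mul _).add ((hKi x3).const_mul _))),
      intervalIntegral.integral_add ((hKi x1).const_mul _)
        (((hKi x2).const_mul _).add ((hKi x3).const_mul _)),
      intervalIntegral.integral_add ((hKi x2).const_mul _) ((hKi x3).const_mul _),
      intervalIntegral.integral_const_mul, intervalIntegral.integral_const_mul,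
      intervalIntegral.integral_const_mul]
    have r1 : (∫ t in c..d, (max (x1 - t) 0)^5/120 * g t) = R x1 := rfl
    have r2 : (∫ t in c..d, (max (x2 - t) 0)^5/120 * g t) = R x2 := rfl
    have r3 : (∫ t in c..d, (max (x3 - t) 0)^5/120 * g t) = R x3 := rfl
    rw [r1, r2, r3]
    have hRint : (∫ x in c..d, R x) = ∫ t in c..d, (d - t)^6/720 * g t := hswap
    linarith [hIR, hQ, hEx, hRint]
  -- mirror identity
  have hmr : ∀ t : ℝ, ((d-t)^6 - (c-t)^6)/6 = (d-c)/18 * (5*(x1 - t)^5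
      + 8*(x2 - t)^5 + 5*(x3 - t)^5) := by
    intro t
    rw [hx1, hx2def, hx3]
    have e2 : (c+d)/2 - t = c + (d-c)/2 - t := by ring
    rw [e2]
    linear_combination (- ((c-t)^3*(d-c)^3/18 + (c-t)^2*(d-c)^4/12
      + (c-t)*(d-c)^5*(10*s^2+1650)/36000 + (d-c)^6*(250*s^2+16250)/1800000)) * hs2
  clear_value x1 x2 x3 s g R C P K
  -- kernel nonnegativity
  have hKpos : ∀ t ∈ Icc c d, 0 ≤ K t := by
    intro t ht
    rcases le_total t x2 with h2 | h2
    · rcases le_total t x1 with h1 | h1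
      · -- t ≤ x1
        have m1 : max (x1 - t) 0 = x1 - t := max_eq_left (by linarith)
        have m2 : max (x2 - t) 0 = x2 - t := max_eq_left (by linarith)
        have m3 : max (x3 - t) 0 = x3 - t := max_eq_left (by linarith)
        have hKt : K t = (c - t)^6/720 := by
          rw [hKdef]
          simp only [m1, m2, m3]
          linear_combination (1/120 : ℝ) * hmr t
        rw [hKt]
        positivity
      · -- x1 ≤ t ≤ x2
        have m1 : max (x1 - t) 0 = 0 := max_eq_right (by linarith)
        have m2 : max (x2 - t) 0 = x2 - t := max_eq_left (by linarith)
        have m3 : max (x3 - t) 0 = x3 - t := max_eq_left (by linarith)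
        have hKt : K t = (t - c)^6/720 - (d-c)/432*(t - x1)^5 := by
          rw [hKdef]
          simp only [m1, m2, m3]
          linear_combination (1/120 : ℝ) * hmr t
        rw [hKt]
        have hmas := master s (d - c) (t - x1) hs2 hs0 hdc (by linarith)
          (by rw [show s*(d-c)/10 = x2 - x1 by rw [hx21]]; linarith)
        have harg : (5-s)/10*(d-c) + (t - x1) = t - c := by rw [hx1]; ring
        rw [harg] at hmas
        nlinarith [hmas]
    · rcases le_total t x3 with h3 | h3
      · -- x2 ≤ t ≤ x3
        have m1 : max (x1 - t) 0 = 0 := max_eq_right (by linarith)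
        have m2 : max (x2 - t) 0 = 0 := max_eq_right (by linarith)
        have m3 : max (x3 - t) 0 = x3 - t := max_eq_left (by linarith)
        have hKt : K t = (d - t)^6/720 - (d-c)/432*(x3 - t)^5 := by
          rw [hKdef]
          simp only [m1, m2, m3]
          ring
        rw [hKt]
        have hmas := master s (d - c) (x3 - t) hs2 hs0 hdc (by linarith)
          (by rw [show s*(d-c)/10 = x3 - x2 by rw [hx32]]; linarith)
        have harg : (5-s)/10*(d-c) + (x3 - t) = d - t := by rw [hx3]; ring
        rw [harg] at hmas
        nlinarith [hmas]
      · -- x3 ≤ t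
        have m1 : max (x1 - t) 0 = 0 := max_eq_right (by linarith)
        have m2 : max (x2 - t) 0 = 0 := max_eq_right (by linarith)
        have m3 : max (x3 - t) 0 = 0 := max_eq_right (by linarith)
        have hKt : K t = (d - t)^6/720 := by
          rw [hKdef]
          simp only [m1, m2, m3]
          ring
        rw [hKt]
        positivity
  -- integral of K
  have hKcont : Continuous K := by rw [hKdef]; fun_prop
  have hIK : ∫ t in c..d, K t = (d - c)^7/2016000 := by
    have i0 : IntervalIntegrable (fun t => (d - t)^6/720) volume c d :=
      Continuous.intervalIntegrable (by fun_prop) _ _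
    have i1 : IntervalIntegrable (fun t => (max (x1 - t) 0)^5/120) volume c d :=
      Continuous.intervalIntegrable (by fun_prop) _ _
    have i2 : IntervalIntegrable (fun t => (max (x2 - t) 0)^5/120) volume c d :=
      Continuous.intervalIntegrable (by fun_prop) _ _
    have i3 : IntervalIntegrable (fun t => (max (x3 - t) 0)^5/120) volume c d :=
      Continuous.intervalIntegrable (by fun_prop) _ _
    have e : ∫ t in c..d, K t
        = ∫ t in c..d, ((d - t)^6/720
          - ((5*(d-c)/18) * ((max (x1 - t) 0)^5/120)
            + ((8*(d-c)/18) * ((max (x2 - t) 0)^5/120)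
              + (5*(d-c)/18) * ((max (x3 - t) 0)^5/120)))) := by
      apply intervalIntegral.integral_congr
      intro t _
      rw [hKdef]
    rw [e, intervalIntegral.integral_sub i0
        ((i1.const_mul _).add ((i2.const_mul _).add (i3.const_mul _))),
      intervalIntegral.integral_add (i1.const_mul _) ((i2.const_mul _).add (i3.const_mul _)),
      intervalIntegral.integral_add (i2.const_mul _) (i3.const_mul _),
      intervalIntegral.integral_const_mul, intervalIntegral.integral_const_mul,
      intervalIntegral.integral_const_mul,
      kern_int x1 c d hx1m.1 hx1m.2, kern_int x2 c d hx2m.1 hx2m.2,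
      kern_int x3 c d hx3m.1 hx3m.2]
    have i00 : (∫ t in c..d, (d - t)^6/720) = (d - c)^7/5040 := by
      have hA : ∀ t : ℝ, HasDerivAt (fun y => -(d - y)^7/5040) ((d - t)^6/720) t := by
        intro t
        have h0 : HasDerivAt (fun y : ℝ => d - y) (-1) t := by
          simpa using ((hasDerivAt_id t).const_sub d)
        have := (h0.fun_pow 7).const_mul (-(1:ℝ)/5040)
        convert this using 1
        · rfl
        · rfl
        · funext y; ring
        · push_cast; ring
      rw [intervalIntegral.integral_eq_sub_of_hasDerivAt (fun t _ => hA t)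
        (Continuous.intervalIntegrable (by fun_prop) _ _)]
      ring
    rw [i00]
    have ex1 : x1 - c = (5-s)/10*(d-c) := by rw [hx1]; ring
    have ex2 : x2 - c = (d-c)/2 := by rw [hx2def]; ring
    have ex3 : x3 - c = (5+s)/10*(d-c) := by rw [hx3]; ring
    rw [ex1, ex2, ex3]
    linear_combination (- (d-c)^7*(s^4+390*s^2+15225)/1296000000) * hs2
  -- final bound
  rw [hE]
  have habs : |∫ t in c..d, K t * g t| ≤ ∫ t in c..d, |K t * g t| :=
    intervalIntegral.abs_integral_le_integral_abs hcd.le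
  have hKM : IntervalIntegrable (fun t => K t * M) volume c d :=
    Continuous.intervalIntegrable (by fun_prop) _ _
  have hKgabs : IntervalIntegrable (fun t => |K t * g t|) volume c d := by
    apply ContinuousOn.intervalIntegrable
    apply ContinuousOn.abs
    apply ContinuousOn.mul (hKcont.continuousOn)
    rwa [uIcc_of_le hcd.le]
  have hmono : (∫ t in c..d, |K t * g t|) ≤ ∫ t in c..d, K t * M := by
    apply intervalIntegral.integral_mono_on hcd.le hKgabs hKM
    intro t ht
    rw [abs_mul, abs_of_nonneg (hKpos t ht)]
    exact mul_le_mul_of_nonneg_left (hM t (hsubab ht)) (hKpos t ht)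
  have hval : (∫ t in c..d, K t * M) = (d - c)^7/2016000 * M := by
    rw [intervalIntegral.integral_mul_const, hIK]
  linarith

end GaussAux

open GaussAux in
theorem composite_gauss_error (a b : ℝ) (hab : a < b) (f : ℝ → ℝ)
    (hf : ContDiffOn ℝ 6 f (Set.Icc a b)) (n : ℕ) (hn : 1 ≤ n) :
    |(∫ x in a..b, f x) - gaussC n f a b| ≤
      (b - a) ^ 7 / (2016000 * n ^ 6) * ⨆ x : Set.Icc a b, |iteratedDerivWithin 6 f (Set.Icc a b) x| := by
  set g := iteratedDerivWithin 6 f (Set.Icc a b) with hgdef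
  have hg : ContinuousOn g (Set.Icc a b) :=
    hf.continuousOn_iteratedDerivWithin le_rfl (uniqueDiffOn_Icc hab)
  set M := ⨆ x : Set.Icc a b, |g x| with hMdef
  have hbdd : BddAbove (Set.range fun x : Set.Icc a b => |g x|) := by
    obtain ⟨C, hC⟩ := isCompact_Icc.exists_bound_of_continuousOn hg
    refine ⟨C, ?_⟩
    rintro y ⟨t, rfl⟩
    simpa using hC t t.2
  have hM : ∀ t ∈ Set.Icc a b, |g t| ≤ M := fun t ht => le_ciSup hbdd ⟨t, ht⟩
  have hn0 : (0:ℝ) < n := by exact_mod_cast Nat.lt_of_lt_of_le Nat.zero_lt_one hn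
  have hnne : (n:ℝ) ≠ 0 := ne_of_gt hn0
  set x : ℕ → ℝ := fun k => a + k * (b - a) / n with hxdef
  have hstep : ∀ k : ℕ, x (k+1) - x k = (b - a)/n := by
    intro k; rw [hxdef]; push_cast; field_simp; ring
  have hw : 0 < (b - a)/n := div_pos (by linarith) hn0
  have hlt : ∀ k : ℕ, x k < x (k+1) := fun k => sub_pos.mp (by rw [hstep k]; exact hw)
  have hmem : ∀ k, k ≤ n → x k ∈ Set.Icc a b := by
    intro k hk
    have hk' : (k:ℝ) ≤ n := by exact_mod_cast hk
    constructor
    · simp only [hxdef]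
      have : 0 ≤ (k:ℝ) * (b - a)/n :=
        div_nonneg (mul_nonneg (Nat.cast_nonneg k) (by linarith)) hn0.le
      linarith
    · simp only [hxdef]
      have h2 : (k:ℝ) * (b - a) / n ≤ b - a := by
        rw [div_le_iff₀ hn0]; nlinarith [hk']
      linarith
  have hsum : ∑ k ∈ Finset.range n, ∫ t in x k..x (k+1), f t = ∫ t in (x 0)..(x n), f t := by
    apply intervalIntegral.sum_integral_adjacent_intervals
    intro k hk
    apply ContinuousOn.intervalIntegrable
    apply hf.continuousOn.mono
    rw [Set.uIcc_of_le (hlt k).le]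
    exact Set.Icc_subset_Icc (hmem k (Nat.le_of_lt hk)).1 (hmem (k+1) hk).2
  have hx0 : x 0 = a := by rw [hxdef]; simp
  have hxn : x n = b := by rw [hxdef]; field_simp; ring
  have hgC : gaussC n f a b = ∑ k ∈ Finset.range n, gaussQ f (x k) (x (k+1)) := by
    rw [gaussC]
    apply Finset.sum_congr rfl
    intro k _
    have e1 : x k = a + (k:ℝ)*(b-a)/(n:ℝ) := by simp only [hxdef]
    have e2 : x (k+1) = a + ((k:ℝ)+1)*(b-a)/(n:ℝ) := by simp only [hxdef]; push_cast; ring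
    rw [e1, e2]
  have key : ∀ k ∈ Finset.range n,
      |(∫ t in x k..x (k+1), f t) - gaussQ f (x k) (x (k+1))| ≤ ((b-a)/n)^7/2016000 * M := by
    intro k hk
    have hk' := Finset.mem_range.mp hk
    have hsi := single_interval hab hf (hlt k) (hmem k hk'.le).1 (hmem (k+1) hk').2 hM
    rwa [show x (k+1) - x k = (b-a)/n from hstep k] at hsi
  calc |(∫ x in a..b, f x) - gaussC n f a b|
      = |∑ k ∈ Finset.range n, ((∫ t in x k..x (k+1), f t) - gaussQ f (x k) (x (k+1)))| := by
        rw [Finset.sum_sub_distrib, hsum, hx0, hxn, hgC]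
    _ ≤ ∑ k ∈ Finset.range n, |(∫ t in x k..x (k+1), f t) - gaussQ f (x k) (x (k+1))| :=
        Finset.abs_sum_le_sum_abs _ _
    _ ≤ ∑ _k ∈ Finset.range n, ((b-a)/n)^7/2016000 * M := Finset.sum_le_sum key
    _ = n * (((b-a)/n)^7/2016000 * M) := by
        rw [Finset.sum_const, Finset.card_range, nsmul_eq_mul]
    _ = (b - a)^7 / (2016000 * n^6) * M := by
        field_simp
end
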